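/- arXiv:2411.16364 — 5 statements merged into one kernel-verified Lean document; each statement's English description precedes it below -/
import Mathlib

section
/- Let K be a field and S = K[x_1, …, x_n] a polynomial ring with a fixed monomial order <, and let f, g ∈ S be polynomials such that the initial term in_<(fg) is a squarefree monomial. Then C_f ⊆ C_{fg}, i.e., every Knutson ideal associated to f is a Knutson ideal associated to fg. -/
open MvPolynomial

universe u v

/-! ### Cells and collections of cells -/

/-- A cell, identified by its lower-left corner: the cell `[a, a+(1,1)]`. -/
abbrev Cell : Type := ℕ × ℕ

/-- The four vertices (corners) of a cell. -/
def cellVertices (c : Cell) : Finset (ℕ × ℕ) :=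
  {(c.1, c.2), (c.1 + 1, c.2), (c.1, c.2 + 1), (c.1 + 1, c.2 + 1)}

/-- The vertex set of a collection of cells. -/
def vertexSet (P : Finset Cell) : Finset (ℕ × ℕ) :=
  P.biUnion cellVertices

/-- Two cells share a common edge. -/
def AdjCells (c d : Cell) : Prop :=
  (c.1 = d.1 ∧ (c.2 + 1 = d.2 ∨ d.2 + 1 = c.2)) ∨
    (c.2 = d.2 ∧ (c.1 + 1 = d.1 ∨ d.1 + 1 = c.1))

/-- A polyomino: a nonempty collection of cells with positive coordinates in which
any two cells are connected by a path of cells of the collection, consecutive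
ones sharing an edge. -/
def IsPolyomino (P : Finset Cell) : Prop :=
  P.Nonempty ∧ (∀ c ∈ P, 1 ≤ c.1 ∧ 1 ≤ c.2) ∧
    ∀ c ∈ P, ∀ d ∈ P,
      Relation.ReflTransGen (fun x y => x ∈ P ∧ y ∈ P ∧ AdjCells x y) c d

/-- A collection of cells is simple if any two cells not in it are connected by a path
of cells not in it. -/
def IsSimple (P : Finset Cell) : Prop :=
  ∀ c d : Cell, c ∉ P → d ∉ P →
    Relation.ReflTransGen (fun x y => x ∉ P ∧ y ∉ P ∧ AdjCells x y) c d

/-- A collection of cells is thin if it contains no 2×2 square of cells. -/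
def IsThin (P : Finset Cell) : Prop :=
  ¬ ∃ c : Cell, c ∈ P ∧ (c.1 + 1, c.2) ∈ P ∧ (c.1, c.2 + 1) ∈ P ∧ (c.1 + 1, c.2 + 1) ∈ P

/-- The cell with lower-left corner `c` lies inside the interval `[u, w]`. -/
def CellInInterval (u w : ℕ × ℕ) (c : Cell) : Prop :=
  u.1 ≤ c.1 ∧ c.1 + 1 ≤ w.1 ∧ u.2 ≤ c.2 ∧ c.2 + 1 ≤ w.2

/-- `[a, b]` is an inner interval of the collection of cells `P`:
it is a proper interval all of whose cells belong to `P`. -/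
def IsInnerInterval (P : Finset Cell) (a b : ℕ × ℕ) : Prop :=
  a.1 < b.1 ∧ a.2 < b.2 ∧ ∀ c : Cell, CellInInterval a b c → c ∈ P

/-- A maximal inner interval of `P`. -/
def IsMaximalInnerInterval (P : Finset Cell) (a b : ℕ × ℕ) : Prop :=
  IsInnerInterval P a b ∧
    ∀ a' b' : ℕ × ℕ, IsInnerInterval P a' b' → a'.1 ≤ a.1 → a'.2 ≤ a.2 →
      b.1 ≤ b'.1 → b.2 ≤ b'.2 → a' = a ∧ b' = b

/-! ### Convexity notions -/

def HorizontallyConvex (P : Finset Cell) : Prop :=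
  ∀ i k j l : ℕ, (i, j) ∈ P → (k, j) ∈ P → i ≤ l → l ≤ k → (l, j) ∈ P

def VerticallyConvex (P : Finset Cell) : Prop :=
  ∀ i j k l : ℕ, (i, j) ∈ P → (i, k) ∈ P → j ≤ l → l ≤ k → (i, l) ∈ P

/-- A parallelogram polyomino: a convex polyomino whose vertex set is a sublattice of ℕ². -/
def IsParallelogram (P : Finset Cell) : Prop :=
  IsPolyomino P ∧ HorizontallyConvex P ∧ VerticallyConvex P ∧
    ∀ u ∈ vertexSet P, ∀ v ∈ vertexSet P,
      (min u.1 v.1, min u.2 v.2) ∈ vertexSet P ∧ (max u.1 v.1, max u.2 v.2) ∈ vertexSet P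

/-- `v` is a left-most vertex of `P`. -/
def IsLeftmost (P : Finset Cell) (v : ℕ × ℕ) : Prop :=
  v ∈ vertexSet P ∧ ∀ w ∈ vertexSet P, w.2 = v.2 → v.1 ≤ w.1

/-- A ladder polyomino: a horizontally convex polyomino each of whose left-most vertices,
except the lowest one, is the upper-left vertex of a cell of `P`. -/
def IsLadder (P : Finset Cell) : Prop :=
  IsPolyomino P ∧ HorizontallyConvex P ∧
    ∀ v : ℕ × ℕ, IsLeftmost P v →
      (∀ w : ℕ × ℕ, IsLeftmost P w → v.2 ≤ w.2) ∨ (1 ≤ v.2 ∧ (v.1, v.2 - 1) ∈ P)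

/-- The region of the plane covered by a collection of cells. -/
def spSet (P : Finset Cell) : Set (ℝ × ℝ) :=
  ⋃ c ∈ P, {x : ℝ × ℝ | (c.1 : ℝ) ≤ x.1 ∧ x.1 ≤ (c.1 : ℝ) + 1 ∧
      (c.2 : ℝ) ≤ x.2 ∧ x.2 ≤ (c.2 : ℝ) + 1}

/-- A ladder polyomino `P` is based on a polyomino `Q`:
`sp(P) ∩ sp(Q)` is the horizontal segment from `a₁` to `(b, a₁.2)` where `a₁` is the lowest
left-most vertex of `P` and `b` is maximal with `(b, a₁.2) ∈ V(P)`. -/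
def BasedOn (P Q : Finset Cell) : Prop :=
  ∃ a₁ : ℕ × ℕ, ∃ b : ℕ, IsLeftmost P a₁ ∧ (∀ w : ℕ × ℕ, IsLeftmost P w → a₁.2 ≤ w.2) ∧
    (b, a₁.2) ∈ vertexSet P ∧ (∀ v : ℕ, (v, a₁.2) ∈ vertexSet P → v ≤ b) ∧
    spSet P ∩ spSet Q =
      {x : ℝ × ℝ | (a₁.1 : ℝ) ≤ x.1 ∧ x.1 ≤ (b : ℝ) ∧ x.2 = (a₁.2 : ℝ)}

/-! ### Closed and weakly closed paths -/

/-- A closed path polyomino. -/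
def IsClosedPath (P : Finset Cell) : Prop :=
  ∃ (n : ℕ) (A : ℕ → Cell), 6 ≤ n ∧
    A n = A 0 ∧
    (∀ c : Cell, c ∈ P ↔ ∃ i < n, A i = c) ∧
    (∀ i j : ℕ, 1 ≤ i → i < j → j ≤ n → A i ≠ A j) ∧
    (∀ i < n, AdjCells (A i) (A (i + 1))) ∧
    (∀ i < n, ∀ j < n,
      ((j : ZMod n) ≠ (i : ZMod n) - 2 ∧ (j : ZMod n) ≠ (i : ZMod n) - 1 ∧
       (j : ZMod n) ≠ (i : ZMod n) ∧ (j : ZMod n) ≠ (i : ZMod n) + 1 ∧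
       (j : ZMod n) ≠ (i : ZMod n) + 2) →
      cellVertices (A i) ∩ cellVertices (A j) = ∅)

/-- A weakly closed path polyomino. -/
def IsWeaklyClosedPath (P : Finset Cell) : Prop :=
  ∃ (n : ℕ) (A : ℕ → Cell), 6 ≤ n ∧
    A n = A 0 ∧
    (∀ c : Cell, c ∈ P ↔ ∃ i < n, A i = c) ∧
    (∀ i j : ℕ, 1 ≤ i → i < j → j ≤ n → A i ≠ A j) ∧
    (cellVertices (A 0) ∩ cellVertices (A (n - 1))).card = 1 ∧
    (∀ i : ℕ, i ≤ n - 2 → AdjCells (A i) (A (i + 1))) ∧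
    (∀ i : ℕ, 1 ≤ i → i ≤ n → ∀ j : ℕ, 1 ≤ j → j ≤ n →
      ((j : ZMod n) ≠ (i : ZMod n) - 2 ∧ (j : ZMod n) ≠ (i : ZMod n) - 1 ∧
       (j : ZMod n) ≠ (i : ZMod n) ∧ (j : ZMod n) ≠ (i : ZMod n) + 1 ∧
       (j : ZMod n) ≠ (i : ZMod n) + 2) →
      cellVertices (A i) ∩ cellVertices (A j) = ∅)

/-! ### Polyomino ideals -/

/-- The polynomial ring `K[x_v : v ∈ V(P)]`. -/
abbrev PolyRing (K : Type*) [Field K] (P : Finset Cell) : Type _ :=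
  MvPolynomial {v : ℕ × ℕ // v ∈ vertexSet P} K

/-- The binomials attached to the inner intervals of a sub-collection `Q` of `P`,
viewed inside `K[x_v : v ∈ V(P)]`. -/
def innerIntervalBinomials (K : Type*) [Field K] (P Q : Finset Cell) :
    Set (PolyRing K P) :=
  {f | ∃ a b c d : {v : ℕ × ℕ // v ∈ vertexSet P},
      IsInnerInterval Q (a : ℕ × ℕ) (b : ℕ × ℕ) ∧
      (c : ℕ × ℕ) = ((a : ℕ × ℕ).1, (b : ℕ × ℕ).2) ∧
      (d : ℕ × ℕ) = ((b : ℕ × ℕ).1, (a : ℕ × ℕ).2) ∧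
      f = X a * X b - X c * X d}

/-- The ideal of inner 2-minors of a sub-collection `Q` of `P`, inside `K[x_v : v ∈ V(P)]`. -/
noncomputable def cellsIdeal (K : Type*) [Field K] (P Q : Finset Cell) : Ideal (PolyRing K P) :=
  Ideal.span (innerIntervalBinomials K P Q)

/-- The polyomino ideal `I_P`. -/
noncomputable def polyominoIdeal (K : Type*) [Field K] (P : Finset Cell) : Ideal (PolyRing K P) :=
  cellsIdeal K P P

/-! ### Monomial orders, initial monomials, Knutson ideals -/

/-- `μ` is the initial (leading) monomial of `f` with respect to the strict
monomial-comparison relation `lt`. -/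
def IsInitialMonomialRel {σ K : Type*} [CommSemiring K]
    (lt : (σ →₀ ℕ) → (σ →₀ ℕ) → Prop) (f : MvPolynomial σ K) (μ : σ →₀ ℕ) : Prop :=
  μ ∈ f.support ∧ ∀ ν ∈ f.support, ν ≠ μ → lt ν μ

/-- The strict comparison relation of a monomial order. -/
def monomialLT {σ : Type*} (m : MonomialOrder σ) (μ ν : σ →₀ ℕ) : Prop :=
  m.toSyn μ < m.toSyn ν

/-- A squarefree monomial exponent. -/
def SquarefreeMonomial {σ : Type*} (μ : σ →₀ ℕ) : Prop := ∀ v, μ v ≤ 1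

/-- The initial monomial of `f` with respect to `m` exists and is squarefree. -/
def HasSquarefreeInitial {σ K : Type*} [CommSemiring K] (m : MonomialOrder σ)
    (f : MvPolynomial σ K) : Prop :=
  ∃ μ, IsInitialMonomialRel (monomialLT m) f μ ∧ SquarefreeMonomial μ

/-- The family `C_f` of Knutson ideals associated to `f`: the smallest family of ideals
containing `(f)` and closed under colon ideals, sums and intersections. -/
inductive KnutsonClass {σ K : Type*} [Field K] (f : MvPolynomial σ K) :
    Ideal (MvPolynomial σ K) → Prop
  | base : KnutsonClass f (Ideal.span {f})
  | colon (I J : Ideal (MvPolynomial σ K)) :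
      KnutsonClass f I → KnutsonClass f (Submodule.colon I J)
  | add (I J : Ideal (MvPolynomial σ K)) :
      KnutsonClass f I → KnutsonClass f J → KnutsonClass f (I + J)
  | inter (I J : Ideal (MvPolynomial σ K)) :
      KnutsonClass f I → KnutsonClass f J → KnutsonClass f (I ⊓ J)

/-- An ideal is a Knutson ideal if it belongs to `C_f` for some `f` whose initial
monomial (with respect to some monomial order) is squarefree. -/
def IsKnutsonIdeal {σ : Type u} {K : Type*} [Field K] (I : Ideal (MvPolynomial σ K)) : Prop :=
  ∃ (m : MonomialOrder.{u, u} σ) (f : MvPolynomial σ K),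
    HasSquarefreeInitial m f ∧ KnutsonClass f I

/-! ### Height, unmixedness, homogeneity, König type -/

/-- The height of an ideal: the infimum of the heights of the primes containing it. -/
noncomputable def idealHeight {R : Type*} [CommRing R] (I : Ideal R) : ℕ∞ :=
  ⨅ (p : PrimeSpectrum R) (_ : I ≤ p.asIdeal), Order.height p

/-- An ideal is unmixed if all its associated primes have the same height. -/
def IsUnmixed {R : Type*} [CommRing R] (I : Ideal R) : Prop :=
  ∀ p q : Ideal R, IsAssociatedPrime p (R ⧸ I) → IsAssociatedPrime q (R ⧸ I) →
    idealHeight p = idealHeight q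

/-- A homogeneous ideal of a polynomial ring. -/
def IsHomogeneousIdeal {σ K : Type*} [CommSemiring K] (I : Ideal (MvPolynomial σ K)) : Prop :=
  ∀ f ∈ I, ∀ n : ℕ, MvPolynomial.homogeneousComponent n f ∈ I

/-- `I` is of König type with respect to the monomial order `m` and the polynomials
`f 0, …, f (h-1)`. -/
def IsKonigTypeWrt {σ K : Type*} [Field K] (m : MonomialOrder σ)
    (I : Ideal (MvPolynomial σ K)) (h : ℕ) (f : Fin h → MvPolynomial σ K) : Prop :=
  idealHeight I = (h : ℕ∞) ∧
  Function.Injective f ∧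
  (∃ G : Set (MvPolynomial σ K),
    (∀ g ∈ G, ∃ n : ℕ, MvPolynomial.IsHomogeneous g n) ∧
    Ideal.span G = I ∧
    (∀ g ∈ G, Ideal.span (G \ {g}) ≠ I) ∧
    ∀ i, f i ∈ G) ∧
  ∃ μ : Fin h → (σ →₀ ℕ),
    (∀ i, IsInitialMonomialRel (monomialLT m) (f i) (μ i)) ∧
    RingTheory.Sequence.IsRegular (MvPolynomial σ K)
      (List.ofFn fun i =>
        (MvPolynomial.monomial (μ i) (MvPolynomial.coeff (μ i) (f i)) : MvPolynomial σ K))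

/-- `I` is of König type. -/
def IsKonigType {σ : Type u} {K : Type*} [Field K] (I : Ideal (MvPolynomial σ K)) : Prop :=
  ∃ (m : MonomialOrder.{u, u} σ) (h : ℕ) (f : Fin h → MvPolynomial σ K), IsKonigTypeWrt m I h f

/-! ### The graded reverse lexicographic order used in the paper -/

/-- The variable order `x_{(i,j)} < x_{(k,l)}` iff `i < k`, or `i = k` and `j < l`. -/
def VarLT (u v : ℕ × ℕ) : Prop := u.1 < v.1 ∨ (u.1 = v.1 ∧ u.2 < v.2)

/-- The strict graded reverse lexicographic comparison of exponent vectors, where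
variables are embedded into ℕ² and ordered by `VarLT`. -/
def GrevlexLT {σ : Type*} (emb : σ → ℕ × ℕ) (μ ν : σ →₀ ℕ) : Prop :=
  (μ.sum fun _ e => e) < (ν.sum fun _ e => e) ∨
    ((μ.sum fun _ e => e) = (ν.sum fun _ e => e) ∧
      ∃ v, ν v < μ v ∧ ∀ w, VarLT (emb w) (emb v) → μ w = ν w)

/-- The initial ideal of `I` with respect to the relation `lt`. -/
noncomputable def initialIdealRel {σ K : Type*} [Field K] (lt : (σ →₀ ℕ) → (σ →₀ ℕ) → Prop)
    (I : Ideal (MvPolynomial σ K)) : Ideal (MvPolynomial σ K) :=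
  Ideal.span {g | ∃ f ∈ I, ∃ μ, IsInitialMonomialRel lt f μ ∧
    g = MvPolynomial.monomial μ (1 : K)}

/-- `G` is a Gröbner basis of `I` with respect to the relation `lt`. -/
def IsGroebnerBasisRel {σ K : Type*} [Field K] (lt : (σ →₀ ℕ) → (σ →₀ ℕ) → Prop)
    (G : Set (MvPolynomial σ K)) (I : Ideal (MvPolynomial σ K)) : Prop :=
  (∀ g ∈ G, g ≠ 0 ∧ g ∈ I) ∧
    Ideal.span {g | ∃ f ∈ G, ∃ μ, IsInitialMonomialRel lt f μ ∧
      g = MvPolynomial.monomial μ (1 : K)} = initialIdealRel lt I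

/-! ### Anti-diagonal chains of vertices and the associated determinants -/

/-- The vertices `v_{k,l} = (i+l, j+n+1-l)`, `1 ≤ l ≤ n`, of an anti-diagonal chain. -/
def chainVerts (i j n : ℕ) : Finset (ℕ × ℕ) :=
  (Finset.Icc 1 n).image fun l => (i + l, j + n + 1 - l)

/-- The cells whose anti-diagonal vertices are consecutive vertices of the chain. -/
def chainCells (i j n : ℕ) : Finset Cell :=
  (Finset.Icc 1 (n - 1)).image fun l => (i + l, j + n - l)

/-- The chain starting at `(i+1, j+n)` of length `n` is a maximal successor-chain in `P`. -/
def IsDiagChain (P : Finset Cell) (i j n : ℕ) : Prop :=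
  1 ≤ n ∧
  (∀ l : ℕ, 1 ≤ l → l ≤ n → (i + l, j + n + 1 - l) ∈ vertexSet P) ∧
  (∀ l : ℕ, 1 ≤ l → l ≤ n - 1 → (i + l, j + n - l) ∈ P) ∧
  (i, j + n) ∉ P ∧
  (i + n, j) ∉ P

/-- The data `c k = (i_k, j_k, n_k)`, `k : Fin s`, is the chain partition of `V(P)`. -/
def IsDiagChainPartition (P : Finset Cell) (s : ℕ) (c : Fin s → ℕ × ℕ × ℕ) : Prop :=
  (∀ k, IsDiagChain P (c k).1 (c k).2.1 (c k).2.2) ∧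
  (∀ k l, k ≠ l →
    Disjoint (chainVerts (c k).1 (c k).2.1 (c k).2.2)
      (chainVerts (c l).1 (c l).2.1 (c l).2.2)) ∧
  (Finset.univ.biUnion (fun k => chainVerts (c k).1 (c k).2.1 (c k).2.2) = vertexSet P) ∧
  (∀ k l : Fin s, k < l →
    ((c k).1 + 1) + ((c k).2.1 + (c k).2.2) < ((c l).1 + 1) + ((c l).2.1 + (c l).2.2) ∨
    (((c k).1 + 1) + ((c k).2.1 + (c k).2.2) = ((c l).1 + 1) + ((c l).2.1 + (c l).2.2) ∧
      (c k).1 + 1 < (c l).1 + 1))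

/-- The determinant `f_k` of the matrix `M_k` associated to a chain: the `(a,b)` entry is
`x_{(i+a, j+b)}` if `(i+a, j+b) ∈ V(P)` and `0` otherwise (`1 ≤ a, b ≤ n`). -/
noncomputable def chainDet (K : Type*) [Field K] (P : Finset Cell) (i j n : ℕ) :
    PolyRing K P :=
  Matrix.det (Matrix.of fun a b : Fin n =>
    if h : (i + (a : ℕ) + 1, j + (b : ℕ) + 1) ∈ vertexSet P then
      (X ⟨(i + (a : ℕ) + 1, j + (b : ℕ) + 1), h⟩ : PolyRing K P) else 0)

/-- The exponent vector of the squarefree monomial `∏_{v ∈ V} x_v` inside `K[x_v : v ∈ V(P)]`. -/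
noncomputable def vertexMonomial (P : Finset Cell) (V : Finset (ℕ × ℕ)) :
    {v : ℕ × ℕ // v ∈ vertexSet P} →₀ ℕ :=
  ∑ v ∈ Finset.filter (fun v : {v : ℕ × ℕ // v ∈ vertexSet P} => (v : ℕ × ℕ) ∈ V)
      (vertexSet P).attach, Finsupp.single v 1

/-! ### The conditions (C1), (C2), (C3) on thin collections of cells -/

/-- (C1): `P` contains no three cells with upper-left vertices
`(i,j), (i+1,j-1), (i+2,j-2)`. -/
def CondC1 (P : Finset Cell) : Prop :=
  ¬ ∃ i m : ℕ, (i, m + 2) ∈ P ∧ (i + 1, m + 1) ∈ P ∧ (i + 2, m) ∈ P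

/-- (C2): for a vertical maximal inner interval `[a, b]` of width one, neither the cell
with lower-right vertex `(a.1, b.2)` nor the cell with upper-left vertex `(a.1+1, a.2)`
belongs to `P`. -/
def CondC2 (P : Finset Cell) : Prop :=
  ∀ a b : ℕ × ℕ, IsMaximalInnerInterval P a b → b.1 = a.1 + 1 →
    (1 ≤ a.1 → (a.1 - 1, b.2) ∉ P) ∧ (1 ≤ a.2 → (a.1 + 1, a.2 - 1) ∉ P)

/-- (C3): for a horizontal maximal inner interval `[a, b]` of height one, neither the cell
with lower-right vertex `(a.1, a.2+1)` nor the cell with upper-left vertex `(b.1, a.2)`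
belongs to `P`. -/
def CondC3 (P : Finset Cell) : Prop :=
  ∀ a b : ℕ × ℕ, IsMaximalInnerInterval P a b → b.2 = a.2 + 1 →
    (1 ≤ a.1 → (a.1 - 1, a.2 + 1) ∉ P) ∧ (1 ≤ a.2 → (b.1, a.2 - 1) ∉ P)


/-- If `in_<(f*g)` is a squarefree monomial, then `C_f ⊆ C_{fg}`. -/
theorem knutsonClass_subset_of_mul {K : Type*} [Field K] {n : ℕ}
    (m : MonomialOrder.{0, v} (Fin n)) (f g : MvPolynomial (Fin n) K)
    (hfg : HasSquarefreeInitial m (f * g)) :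
    ∀ I : Ideal (MvPolynomial (Fin n) K), KnutsonClass f I → KnutsonClass (f * g) I := by
  obtain ⟨μ, ⟨hμ, _⟩, _⟩ := hfg
  have hfg0 : f * g ≠ 0 := fun h => by simp [h] at hμ
  have hg : g ≠ 0 := fun h => hfg0 (by simp [h])
  have key : Ideal.span {f} = Submodule.colon (Ideal.span {f * g}) (Ideal.span {g}) := by
    apply le_antisymm
    · rw [Ideal.span_le]
      intro x hx
      simp only [Set.mem_singleton_iff] at hx
      subst hx
      rw [SetLike.mem_coe, Submodule.mem_colon]
      intro p hp
      obtain ⟨c, rfl⟩ := Ideal.mem_span_singleton'.mp hp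
      rw [smul_eq_mul]
      exact Ideal.mem_span_singleton'.mpr ⟨c, by ring⟩
    · intro x hx
      rw [Submodule.mem_colon] at hx
      have h1 := hx g (Ideal.mem_span_singleton.mpr dvd_rfl)
      rw [smul_eq_mul] at h1
      obtain ⟨c, hc⟩ := Ideal.mem_span_singleton'.mp h1
      have h2 : (x - c * f) * g = 0 := by rw [sub_mul, mul_assoc, hc]; ring
      rcases mul_eq_zero.mp h2 with h | h
      · exact Ideal.mem_span_singleton'.mpr ⟨c, (sub_eq_zero.mp h).symm⟩
      · exact absurd h hg
  intro I hI
  induction hI with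
  | base => rw [key]; exact KnutsonClass.colon _ _ KnutsonClass.base
  | colon I J h ih => exact KnutsonClass.colon _ _ ih
  | add I J h1 h2 ih1 ih2 => exact KnutsonClass.add _ _ ih1 ih2
  | inter I J h1 h2 ih1 ih2 => exact KnutsonClass.inter _ _ ih1 ih2
end

section
/- Let K be a field, P a collection of cells, and adopt the chain partition V_1, …, V_s of V(P) with the associated matrices M_k, polynomials f_k = det M_k and f = ∏_{k=1}^s f_k. With respect to the graded reverse lexicographic order < on S = K[x_v : v ∈ V(P)] induced by x_{(i,j)} < x_{(k,l)} iff i < k, or i = k and j < l, each f_k is nonzero with initial monomial in_<(f_k) = ∏_{v ∈ V_k} x_v, and consequently in_<(f) = ∏_{v ∈ V(P)} x_v. -/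
open MvPolynomial

universe u v

/-! ### Auxiliary lemmas for Statement 8 -/

section Aux

lemma varLT_irrefl (u : ℕ × ℕ) : ¬ VarLT u u := by
  rintro (h | ⟨-, h⟩) <;> exact lt_irrefl _ h

lemma varLT_trans {u v w : ℕ × ℕ} (h1 : VarLT u v) (h2 : VarLT v w) : VarLT u w := by
  rcases h1 with h1 | ⟨e1, h1⟩ <;> rcases h2 with h2 | ⟨e2, h2⟩
  · exact Or.inl (h1.trans h2)
  · exact Or.inl (e2 ▸ h1)
  · exact Or.inl (e1 ▸ h2)
  · exact Or.inr ⟨e1.trans e2, h1.trans h2⟩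

lemma varLT_trichotomy (u v : ℕ × ℕ) : VarLT u v ∨ u = v ∨ VarLT v u := by
  rcases lt_trichotomy u.1 v.1 with h | h | h
  · exact Or.inl (Or.inl h)
  · rcases lt_trichotomy u.2 v.2 with h2 | h2 | h2
    · exact Or.inl (Or.inr ⟨h, h2⟩)
    · exact Or.inr (Or.inl (Prod.ext h h2))
    · exact Or.inr (Or.inr (Or.inr ⟨h.symm, h2⟩))
  · exact Or.inr (Or.inr (Or.inl h))

variable {σ : Type*} {emb : σ → ℕ × ℕ}

lemma grevlexLT_irrefl (μ : σ →₀ ℕ) : ¬ GrevlexLT emb μ μ := by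
  rintro (h | ⟨-, v, h, -⟩) <;> exact lt_irrefl _ h

lemma grevlexLT_trans (hemb : Function.Injective emb) {μ ν ρ : σ →₀ ℕ}
    (h1 : GrevlexLT emb μ ν) (h2 : GrevlexLT emb ν ρ) : GrevlexLT emb μ ρ := by
  rcases h1 with h1 | ⟨e1, v1, hv1, hw1⟩
  · rcases h2 with h2 | ⟨e2, _⟩
    · exact Or.inl (h1.trans h2)
    · exact Or.inl (e2 ▸ h1)
  · rcases h2 with h2 | ⟨e2, v2, hv2, hw2⟩
    · exact Or.inl (e1 ▸ h2)
    · refine Or.inr ⟨e1.trans e2, ?_⟩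
      rcases varLT_trichotomy (emb v1) (emb v2) with h | h | h
      · refine ⟨v1, ?_, fun w hw => (hw1 w hw).trans (hw2 w (varLT_trans hw h))⟩
        rw [← hw2 v1 h]; exact hv1
      · have : v1 = v2 := hemb h
        subst this
        exact ⟨v1, hv2.trans hv1, fun w hw => (hw1 w hw).trans (hw2 w hw)⟩
      · refine ⟨v2, ?_, fun w hw => (hw1 w (varLT_trans hw h)).trans (hw2 w hw)⟩
        rw [hw1 v2 h]; exact hv2

lemma grevlexLT_add_right {μ ν : σ →₀ ℕ} (τ : σ →₀ ℕ) (h : GrevlexLT emb μ ν) :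
    GrevlexLT emb (μ + τ) (ν + τ) := by
  have hs : ∀ (α β : σ →₀ ℕ), ((α + β).sum fun _ e => e) = (α.sum fun _ e => e) + (β.sum fun _ e => e) := by
    intro α β
    exact Finsupp.sum_add_index' (fun _ => rfl) (fun _ _ _ => rfl)
  rcases h with h | ⟨e, v, hv, hw⟩
  · exact Or.inl (by rw [hs, hs]; omega)
  · refine Or.inr ⟨by rw [hs, hs, e], v, ?_, fun w hww => ?_⟩
    · simp only [Finsupp.add_apply]; omega
    · simp only [Finsupp.add_apply, hw w hww]

variable {σ K : Type*} [Field K] {lt : (σ →₀ ℕ) → (σ →₀ ℕ) → Prop}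
  (hirr : ∀ μ, ¬ lt μ μ)
  (htr : ∀ {μ ν ρ}, lt μ ν → lt ν ρ → lt μ ρ)
  (hadd : ∀ {μ ν} (τ : σ →₀ ℕ), lt μ ν → lt (μ + τ) (ν + τ))

include hirr htr hadd in
lemma initial_mul {f g : MvPolynomial σ K} {μ ν : σ →₀ ℕ}
    (hf : IsInitialMonomialRel lt f μ) (hg : IsInitialMonomialRel lt g ν) :
    IsInitialMonomialRel lt (f * g) (μ + ν) := by
  classical
  obtain ⟨hfs, hfmax⟩ := hf
  obtain ⟨hgs, hgmax⟩ := hg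
  -- key: for x1 in supp f, x2 in supp g with (x1,x2) ≠ (μ,ν), lt (x1+x2) (μ+ν)
  have key : ∀ x1 ∈ f.support, ∀ x2 ∈ g.support, ¬(x1 = μ ∧ x2 = ν) → lt (x1 + x2) (μ + ν) := by
    intro x1 h1 x2 h2 hne
    by_cases e1 : x1 = μ
    · subst e1
      have e2 : x2 ≠ ν := fun h => hne ⟨rfl, h⟩
      have := hadd x1 (hgmax x2 h2 e2)
      simpa [add_comm] using this
    · have l1 : lt (x1 + x2) (μ + x2) := hadd x2 (hfmax x1 h1 e1)
      by_cases e2 : x2 = ν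
      · subst e2; exact l1
      · have l2 : lt (μ + x2) (μ + ν) := by
          have := hadd μ (hgmax x2 h2 e2)
          simpa [add_comm] using this
        exact htr l1 l2
  have hcoeff : (f * g).coeff (μ + ν) = f.coeff μ * g.coeff ν := by
    rw [coeff_mul]
    rw [Finset.sum_eq_single_of_mem (μ, ν) (by simp)]
    intro b hb hbne
    rw [Finset.HasAntidiagonal.mem_antidiagonal] at hb
    by_cases hb1 : b.1 ∈ f.support
    · by_cases hb2 : b.2 ∈ g.support
      · exfalso
        have : ¬(b.1 = μ ∧ b.2 = ν) := by
          intro ⟨h1, h2⟩; exact hbne (Prod.ext h1 h2)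
        have := key b.1 hb1 b.2 hb2 this
        rw [hb] at this; exact hirr _ this
      · rw [MvPolynomial.notMem_support_iff.mp hb2, mul_zero]
    · rw [MvPolynomial.notMem_support_iff.mp hb1, zero_mul]
  have hne0 : (f * g).coeff (μ + ν) ≠ 0 := by
    rw [hcoeff]
    exact mul_ne_zero (MvPolynomial.mem_support_iff.mp hfs) (MvPolynomial.mem_support_iff.mp hgs)
  refine ⟨MvPolynomial.mem_support_iff.mpr hne0, fun τ hτ hτne => ?_⟩
  have : (f * g).coeff τ ≠ 0 := MvPolynomial.mem_support_iff.mp hτ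
  rw [coeff_mul] at this
  obtain ⟨⟨x1, x2⟩, hx, hne⟩ := Finset.exists_ne_zero_of_sum_ne_zero this
  rw [Finset.HasAntidiagonal.mem_antidiagonal] at hx
  have h1 : x1 ∈ f.support := MvPolynomial.mem_support_iff.mpr (left_ne_zero_of_mul hne)
  have h2 : x2 ∈ g.support := MvPolynomial.mem_support_iff.mpr (right_ne_zero_of_mul hne)
  have : ¬(x1 = μ ∧ x2 = ν) := by
    rintro ⟨rfl, rfl⟩; exact hτne hx.symm
  have := key x1 h1 x2 h2 this
  rwa [hx] at this

include hirr htr hadd in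
lemma initial_prod {ι : Type*} (t : Finset ι) (f : ι → MvPolynomial σ K) (μ : ι → (σ →₀ ℕ))
    (h : ∀ i ∈ t, IsInitialMonomialRel lt (f i) (μ i)) :
    IsInitialMonomialRel lt (∏ i ∈ t, f i) (∑ i ∈ t, μ i) := by
  classical
  induction t using Finset.induction_on with
  | empty =>
    simp only [Finset.prod_empty, Finset.sum_empty]
    constructor
    · simp [MvPolynomial.mem_support_iff]
    · intro ν hν hne
      exfalso
      apply hne
      have := MvPolynomial.mem_support_iff.mp hν
      by_contra hc
      rw [MvPolynomial.coeff_one] at this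
      simp only [if_neg (fun h : (0:σ→₀ℕ) = ν => hc h.symm)] at this
      exact this rfl
  | insert a s hnotmem ih =>
    rw [Finset.prod_insert hnotmem, Finset.sum_insert hnotmem]
    exact initial_mul hirr @htr @hadd (h a (Finset.mem_insert_self a s))
      (ih fun i hi => h i (Finset.mem_insert_of_mem hi))

end Aux

section Aux2

/-! helpers -/

lemma prod_X_eq_monomial {K σ' ι : Type*} [CommSemiring K] (t : Finset ι) (w : ι → σ') :
    (∏ b ∈ t, (X (w b) : MvPolynomial σ' K)) =
      monomial (∑ b ∈ t, Finsupp.single (w b) 1) 1 := by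
  classical
  induction t using Finset.induction_on with
  | empty => simp
  | insert a s h ih =>
    rw [Finset.prod_insert h, Finset.sum_insert h, ih, X, monomial_mul, one_mul]

lemma sum_single_degree {α β : Type*} (t : Finset α) (w : α → β) :
    ((∑ b ∈ t, Finsupp.single (w b) (1 : ℕ)).sum fun _ e => e) = t.card := by
  classical
  induction t using Finset.induction_on with
  | empty => simp
  | insert a s h ih =>
    rw [Finset.sum_insert h,
      Finsupp.sum_add_index' (fun _ => rfl) (fun _ _ _ => rfl),
      Finsupp.sum_single_index rfl, ih, Finset.card_insert_of_notMem h, add_comm]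

lemma sum_single_apply_eq {ι α : Type*} [DecidableEq α] (t : Finset ι) (v : ι → α) (w : α)
    (hinj : ∀ b ∈ t, ∀ b' ∈ t, v b = v b' → b = b') :
    (∑ b ∈ t, Finsupp.single (v b) (1 : ℕ)) w =
      if ∃ b ∈ t, v b = w then 1 else 0 := by
  classical
  rw [Finsupp.finset_sum_apply]
  simp only [Finsupp.single_apply]
  by_cases hex : ∃ b ∈ t, v b = w
  · obtain ⟨b₀, hb₀t, hb₀⟩ := hex
    rw [if_pos ⟨b₀, hb₀t, hb₀⟩, Finset.sum_eq_single b₀]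
    · rw [if_pos hb₀]
    · intro b hb hbne
      rw [if_neg]
      intro hc
      exact hbne (hinj b hb b₀ hb₀t (hc.trans hb₀.symm))
    · intro h; exact absurd hb₀t h
  · rw [if_neg hex]
    refine Finset.sum_eq_zero fun b hb => ?_
    rw [if_neg]
    intro hc
    exact hex ⟨b, hb, hc⟩

lemma vertexMonomial_apply (P : Finset Cell) (V : Finset (ℕ × ℕ))
    (w : {v : ℕ × ℕ // v ∈ vertexSet P}) :
    vertexMonomial P V w = if (w : ℕ × ℕ) ∈ V then 1 else 0 := by
  classical
  unfold vertexMonomial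
  rw [sum_single_apply_eq _ _ _ (fun b _ b' _ h => h)]
  congr 1
  simp only [eq_iff_iff]
  constructor
  · rintro ⟨b, hb, rfl⟩
    exact (Finset.mem_filter.mp hb).2
  · intro hw
    exact ⟨w, Finset.mem_filter.mpr ⟨Finset.mem_attach _ _, hw⟩, rfl⟩

lemma mem_chainVerts {i j n : ℕ} {w : ℕ × ℕ} :
    w ∈ chainVerts i j n ↔ ∃ l, 1 ≤ l ∧ l ≤ n ∧ (i + l, j + n + 1 - l) = w := by
  simp only [chainVerts, Finset.mem_image, Finset.mem_Icc]
  constructor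
  · rintro ⟨l, ⟨h1, h2⟩, h3⟩; exact ⟨l, h1, h2, h3⟩
  · rintro ⟨l, h1, h2, h3⟩; exact ⟨l, ⟨h1, h2⟩, h3⟩

section chain

variable (P : Finset Cell) (i j n : ℕ)

/-- presence of all entries of the permutation σ (σ maps columns to rows). -/
def ChainPres (σ : Equiv.Perm (Fin n)) : Prop :=
  ∀ b : Fin n, (i + ((σ b : ℕ)) + 1, j + (b : ℕ) + 1) ∈ vertexSet P

instance chainPres_decidable (σ : Equiv.Perm (Fin n)) : Decidable (ChainPres P i j n σ) :=
  inferInstanceAs (Decidable (∀ b : Fin n, _ ∈ vertexSet P))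

noncomputable def chainMono (σ : Equiv.Perm (Fin n)) (h : ChainPres P i j n σ) :
    {v : ℕ × ℕ // v ∈ vertexSet P} →₀ ℕ :=
  ∑ b : Fin n, Finsupp.single ⟨(i + ((σ b : ℕ)) + 1, j + (b : ℕ) + 1), h b⟩ 1

lemma chainMono_apply (σ : Equiv.Perm (Fin n)) (h : ChainPres P i j n σ)
    (w : {v : ℕ × ℕ // v ∈ vertexSet P}) :
    chainMono P i j n σ h w =
      if ∃ b : Fin n, (w : ℕ × ℕ) = (i + ((σ b : ℕ)) + 1, j + (b : ℕ) + 1) then 1 else 0 := by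
  classical
  unfold chainMono
  rw [sum_single_apply_eq]
  · congr 1
    simp only [eq_iff_iff]
    constructor
    · rintro ⟨b, -, rfl⟩; exact ⟨b, rfl⟩
    · rintro ⟨b, hb⟩
      exact ⟨b, Finset.mem_univ _, Subtype.ext hb.symm⟩
  · intro b _ b' _ hbb
    have := Subtype.ext_iff.mp hbb
    simp only [Prod.mk.injEq] at this
    exact Fin.ext (by omega)

lemma chainMono_degree (σ : Equiv.Perm (Fin n)) (h : ChainPres P i j n σ) :
    ((chainMono P i j n σ h).sum fun _ e => e) = n := by
  unfold chainMono
  rw [sum_single_degree]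
  simp

lemma chainPres_rev (hch : IsDiagChain P i j n) : ChainPres P i j n Fin.revPerm := by
  intro b
  have hb : (b : ℕ) < n := b.isLt
  have := hch.2.1 (n - (b : ℕ)) (by omega) (by omega)
  have harg : (i + (n - (b : ℕ)), j + n + 1 - (n - (b : ℕ)))
      = (i + ((Fin.revPerm b : Fin n) : ℕ) + 1, j + (b : ℕ) + 1) := by
    simp only [Fin.revPerm_apply, Fin.val_rev, Prod.mk.injEq]
    omega
  rwa [harg] at this

lemma chainMono_rev (hch : IsDiagChain P i j n) :
    chainMono P i j n Fin.revPerm (chainPres_rev P i j n hch)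
      = vertexMonomial P (chainVerts i j n) := by
  classical
  ext w
  rw [chainMono_apply, vertexMonomial_apply]
  congr 1
  simp only [eq_iff_iff, mem_chainVerts]
  constructor
  · rintro ⟨b, hb⟩
    have hbn : (b : ℕ) < n := b.isLt
    refine ⟨n - (b : ℕ), by omega, by omega, ?_⟩
    rw [hb]
    simp only [Fin.revPerm_apply, Fin.val_rev, Prod.mk.injEq]
    omega
  · rintro ⟨l, hl1, hl2, hl⟩
    refine ⟨⟨n - l, by omega⟩, ?_⟩
    rw [← hl]
    simp only [Fin.revPerm_apply, Fin.val_rev, Prod.mk.injEq]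
    omega

end chain

section chain2
variable (K : Type*) [Field K] (P : Finset Cell) (i j n : ℕ)

lemma chainDet_eq :
    chainDet K P i j n = ∑ σ : Equiv.Perm (Fin n),
      if h : ChainPres P i j n σ then
        Equiv.Perm.sign σ • (monomial (chainMono P i j n σ h) (1 : K)) else 0 := by
  classical
  rw [chainDet, Matrix.det_apply]
  refine Finset.sum_congr rfl fun σ _ => ?_
  by_cases h : ChainPres P i j n σ
  · rw [dif_pos h]
    congr 1
    have : ∀ b ∈ Finset.univ, (Matrix.of fun a b : Fin n =>
        if h : (i + (a : ℕ) + 1, j + (b : ℕ) + 1) ∈ vertexSet P then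
          (X ⟨(i + (a : ℕ) + 1, j + (b : ℕ) + 1), h⟩ : PolyRing K P) else 0) (σ b) b
        = X (⟨(i + ((σ b : ℕ)) + 1, j + (b : ℕ) + 1), h b⟩ :
            {v : ℕ × ℕ // v ∈ vertexSet P}) := by
      intro b _
      rw [Matrix.of_apply, dif_pos (h b)]
    rw [Finset.prod_congr rfl this, prod_X_eq_monomial]
    rfl
  · rw [dif_neg h]
    simp only [ChainPres, not_forall] at h
    obtain ⟨b, hb⟩ := h
    rw [Finset.prod_eq_zero (Finset.mem_univ b) (by rw [Matrix.of_apply, dif_neg hb]),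
      smul_zero]

lemma sign_smul_one_ne (u : ℤˣ) : (u • (1 : K)) ≠ 0 := by
  rcases Int.units_eq_one_or u with h | h <;> rw [h] <;> simp

lemma chainDet_support {ν : {v : ℕ × ℕ // v ∈ vertexSet P} →₀ ℕ}
    (hν : ν ∈ (chainDet K P i j n).support) :
    ∃ (σ : Equiv.Perm (Fin n)) (h : ChainPres P i j n σ), chainMono P i j n σ h = ν := by
  classical
  have hc := MvPolynomial.mem_support_iff.mp hν
  rw [chainDet_eq, coeff_sum] at hc
  obtain ⟨σ, -, hσ⟩ := Finset.exists_ne_zero_of_sum_ne_zero hc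
  by_cases h : ChainPres P i j n σ
  · refine ⟨σ, h, ?_⟩
    rw [dif_pos h, coeff_smul, coeff_monomial] at hσ
    by_contra hne
    rw [if_neg hne, smul_zero] at hσ
    exact hσ rfl
  · rw [dif_neg h, coeff_zero] at hσ
    exact absurd rfl hσ

lemma chainMono_eq_rev (σ : Equiv.Perm (Fin n)) (h : ChainPres P i j n σ)
    (hmono : chainMono P i j n σ h = vertexMonomial P (chainVerts i j n)) :
    σ = Fin.revPerm := by
  apply Equiv.ext
  intro b
  have happ := congrArg (fun m => m ⟨(i + ((σ b : ℕ)) + 1, j + (b : ℕ) + 1), h b⟩) hmono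
  simp only [chainMono_apply, vertexMonomial_apply] at happ
  rw [if_pos ⟨b, rfl⟩] at happ
  have hmem : ((i + ((σ b : ℕ)) + 1, j + (b : ℕ) + 1)) ∈ chainVerts i j n := by
    by_contra hc
    rw [if_neg hc] at happ
    exact one_ne_zero happ
  obtain ⟨l, hl1, hl2, hl⟩ := mem_chainVerts.mp hmem
  simp only [Prod.mk.injEq] at hl
  have hbn : (b : ℕ) < n := b.isLt
  have hsn : ((σ b : ℕ)) < n := (σ b).isLt
  refine Fin.ext ?_
  simp only [Fin.revPerm_apply, Fin.val_rev]
  omega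

lemma chainDet_coeff_mu (hch : IsDiagChain P i j n) :
    coeff (vertexMonomial P (chainVerts i j n)) (chainDet K P i j n) ≠ 0 := by
  classical
  rw [chainDet_eq, coeff_sum]
  rw [Finset.sum_eq_single (Fin.revPerm : Equiv.Perm (Fin n))]
  · rw [dif_pos (chainPres_rev P i j n hch), coeff_smul, coeff_monomial,
      if_pos (chainMono_rev P i j n hch)]
    exact sign_smul_one_ne K _
  · intro σ _ hσne
    by_cases h : ChainPres P i j n σ
    · rw [dif_pos h, coeff_smul, coeff_monomial, if_neg, smul_zero]
      intro hc
      exact hσne (chainMono_eq_rev P i j n σ h hc)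
    · rw [dif_neg h, coeff_zero]
  · intro hmem
    exact absurd (Finset.mem_univ _) hmem

end chain2

lemma chainMono_lt (P : Finset Cell) (i j n : ℕ) (hch : IsDiagChain P i j n)
    (σ : Equiv.Perm (Fin n)) (h : ChainPres P i j n σ) (hσ : σ ≠ Fin.revPerm) :
    GrevlexLT (Subtype.val : {v : ℕ × ℕ // v ∈ vertexSet P} → ℕ × ℕ)
      (chainMono P i j n σ h) (vertexMonomial P (chainVerts i j n)) := by
  classical
  have hn : 1 ≤ n := hch.1
  have hdegμ : ((vertexMonomial P (chainVerts i j n)).sum fun _ e => e) = n := by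
    rw [← chainMono_rev P i j n hch, chainMono_degree]
  refine Or.inr ⟨by rw [chainMono_degree, hdegμ], ?_⟩
  set τ := σ.symm with hτ
  have hTne : (Finset.univ.filter fun r : Fin n => τ r ≠ Fin.rev r).Nonempty := by
    by_contra hc
    rw [Finset.not_nonempty_iff_eq_empty, Finset.filter_eq_empty_iff] at hc
    apply hσ
    have hτrev : τ = Fin.revPerm := Equiv.ext fun r => by
      have := hc (Finset.mem_univ r); simpa using this
    have hστ : σ = τ.symm := by rw [hτ, Equiv.symm_symm]
    rw [hστ, hτrev, Fin.revPerm_symm]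
  obtain ⟨r₀, hr₀T, hr₀min⟩ :
      ∃ r₀ ∈ (Finset.univ.filter fun r : Fin n => τ r ≠ Fin.rev r),
        ∀ r ∈ (Finset.univ.filter fun r : Fin n => τ r ≠ Fin.rev r), r₀ ≤ r :=
    ⟨_, Finset.min'_mem _ hTne, fun r hr => Finset.min'_le _ r hr⟩
  have hr₀mem : τ r₀ ≠ Fin.rev r₀ := (Finset.mem_filter.mp hr₀T).2
  have hsmall : ∀ r : Fin n, r < r₀ → τ r = Fin.rev r := by
    intro r hr
    by_contra hc
    exact absurd (hr₀min r (Finset.mem_filter.mpr ⟨Finset.mem_univ r, hc⟩)) (not_le.mpr hr)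
  have hr₀n : (r₀ : ℕ) < n := r₀.isLt
  have hlt : ((τ r₀ : ℕ)) < n - ((r₀ : ℕ) + 1) := by
    rcases lt_trichotomy ((τ r₀ : ℕ)) (n - ((r₀ : ℕ) + 1)) with hl | he | hg
    · exact hl
    · exact absurd (Fin.ext (by simp only [Fin.val_rev]; omega)) hr₀mem
    · exfalso
      have h1 := (τ r₀).isLt
      have hrval : ((Fin.rev (τ r₀) : Fin n) : ℕ) = n - ((τ r₀ : ℕ) + 1) := rfl
      have hrlt : Fin.rev (τ r₀) < r₀ := by
        rw [Fin.lt_def, hrval]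
        omega
      have hs := hsmall _ hrlt
      rw [Fin.rev_rev] at hs
      exact absurd (τ.injective hs) (ne_of_lt hrlt)
  have hpres_v : (i + (r₀ : ℕ) + 1, j + ((τ r₀ : ℕ)) + 1) ∈ vertexSet P := by
    have := h (τ r₀)
    rwa [show σ (τ r₀) = r₀ from σ.apply_symm_apply r₀] at this
  refine ⟨⟨(i + (r₀ : ℕ) + 1, j + ((τ r₀ : ℕ)) + 1), hpres_v⟩, ?_, ?_⟩
  · have hcoe : ((⟨(i + (r₀ : ℕ) + 1, j + ((τ r₀ : ℕ)) + 1), hpres_v⟩ :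
        {v : ℕ × ℕ // v ∈ vertexSet P}) : ℕ × ℕ)
        = (i + (r₀ : ℕ) + 1, j + ((τ r₀ : ℕ)) + 1) := rfl
    have hvmem : (i + (r₀ : ℕ) + 1, j + ((τ r₀ : ℕ)) + 1) ∉ chainVerts i j n := by
      intro hc
      obtain ⟨l, hl1, hl2, hl⟩ := mem_chainVerts.mp hc
      simp only [Prod.mk.injEq] at hl
      omega
    rw [chainMono_apply, vertexMonomial_apply, hcoe,
      if_neg hvmem, if_pos ⟨τ r₀, by rw [σ.apply_symm_apply]⟩]
    norm_num
  · intro w hw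
    have hw' : ((w : ℕ × ℕ)).1 < i + (r₀ : ℕ) + 1 ∨
        (((w : ℕ × ℕ)).1 = i + (r₀ : ℕ) + 1 ∧
          ((w : ℕ × ℕ)).2 < j + ((τ r₀ : ℕ)) + 1) := hw
    rw [chainMono_apply, vertexMonomial_apply]
    refine if_congr ?_ rfl rfl
    constructor
    · rintro ⟨b, hb⟩
      rw [mem_chainVerts]
      have hbval : ((w : ℕ × ℕ)).1 = i + ((σ b : ℕ)) + 1 ∧
          ((w : ℕ × ℕ)).2 = j + (b : ℕ) + 1 := by
        rw [hb]; exact ⟨rfl, rfl⟩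
      have hσbn : ((σ b : ℕ)) < n := (σ b).isLt
      rcases hw' with h1 | ⟨h1, h2⟩
      · have hσblt : σ b < r₀ := by
          rw [Fin.lt_def]; omega
        have hbrev : b = Fin.rev (σ b) := by
          have hsb := hsmall (σ b) hσblt
          rw [← hsb, hτ, Equiv.symm_apply_apply]
        have hbv : (b : ℕ) = n - ((σ b : ℕ) + 1) := congrArg Fin.val hbrev
        refine ⟨(σ b : ℕ) + 1, by omega, by omega, ?_⟩
        rw [hb]
        simp only [Prod.mk.injEq]
        omega
      · exfalso
        have hσbr : σ b = r₀ := Fin.ext (by omega)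
        have hbτ : b = τ r₀ := by rw [← hσbr, hτ, Equiv.symm_apply_apply]
        have hbv : (b : ℕ) = ((τ r₀ : ℕ)) := congrArg Fin.val hbτ
        omega
    · intro hc
      obtain ⟨l, hl1, hl2, hl⟩ := mem_chainVerts.mp hc
      have hlf : i + l = ((w : ℕ × ℕ)).1 := congrArg Prod.fst hl
      have hls : j + n + 1 - l = ((w : ℕ × ℕ)).2 := congrArg Prod.snd hl
      rcases hw' with h1 | ⟨h1, h2⟩
      · obtain ⟨r, hrval⟩ : ∃ r : Fin n, (r : ℕ) = l - 1 := ⟨⟨l - 1, by omega⟩, rfl⟩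
        have hrlt : r < r₀ := by rw [Fin.lt_def]; omega
        refine ⟨τ r, ?_⟩
        rw [σ.apply_symm_apply, hsmall r hrlt]
        have h3 : ((Fin.rev r : Fin n) : ℕ) = n - ((r : ℕ) + 1) := rfl
        rw [Prod.ext_iff]
        refine ⟨?_, ?_⟩
        · show ((w : ℕ × ℕ)).1 = i + (r : ℕ) + 1
          rw [← hlf]; omega
        · show ((w : ℕ × ℕ)).2 = j + ((Fin.rev r : Fin n) : ℕ) + 1
          rw [← hls]; omega
      · exfalso
        have h4 := (τ r₀).isLt
        omega

lemma chainDet_initial (K : Type*) [Field K] (P : Finset Cell) (i j n : ℕ)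
    (hch : IsDiagChain P i j n) :
    chainDet K P i j n ≠ 0 ∧
    IsInitialMonomialRel (GrevlexLT (Subtype.val : {v : ℕ × ℕ // v ∈ vertexSet P} → ℕ × ℕ))
      (chainDet K P i j n) (vertexMonomial P (chainVerts i j n)) := by
  have hsupp : vertexMonomial P (chainVerts i j n) ∈ (chainDet K P i j n).support :=
    MvPolynomial.mem_support_iff.mpr (chainDet_coeff_mu K P i j n hch)
  refine ⟨fun h0 => by simp [h0] at hsupp, hsupp, ?_⟩
  intro ν hν hne
  obtain ⟨σ, h, rfl⟩ := chainDet_support K P i j n hν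
  have hσ : σ ≠ Fin.revPerm := by
    rintro rfl
    exact hne (chainMono_rev P i j n hch)
  exact chainMono_lt P i j n hch σ h hσ


end Aux2

/-- For the chain partition `V_1, …, V_s` of `V(P)`, with respect to the
graded reverse lexicographic order induced by `x_{(i,j)} < x_{(k,l)}` iff `i < k`, or
`i = k` and `j < l`: every `f_k = det M_k` is nonzero with initial monomial
`∏_{v ∈ V_k} x_v`, and the initial monomial of `f = ∏ f_k` is `∏_{v ∈ V(P)} x_v`. -/
theorem chainDet_initial_monomial (K : Type*) [Field K] (P : Finset Cell)
    (s : ℕ) (c : Fin s → ℕ × ℕ × ℕ) (hpart : IsDiagChainPartition P s c) :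
    (∀ k : Fin s,
      chainDet K P (c k).1 (c k).2.1 (c k).2.2 ≠ 0 ∧
        IsInitialMonomialRel (GrevlexLT (Subtype.val : {v : ℕ × ℕ // v ∈ vertexSet P} → ℕ × ℕ))
          (chainDet K P (c k).1 (c k).2.1 (c k).2.2)
          (vertexMonomial P (chainVerts (c k).1 (c k).2.1 (c k).2.2))) ∧
    IsInitialMonomialRel (GrevlexLT (Subtype.val : {v : ℕ × ℕ // v ∈ vertexSet P} → ℕ × ℕ))
      (∏ k : Fin s, chainDet K P (c k).1 (c k).2.1 (c k).2.2)
      (vertexMonomial P (vertexSet P)) := by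
  classical
  obtain ⟨hchains, hdisj, hcover, -⟩ := hpart
  have hmain : ∀ k : Fin s,
      chainDet K P (c k).1 (c k).2.1 (c k).2.2 ≠ 0 ∧
        IsInitialMonomialRel (GrevlexLT (Subtype.val : {v : ℕ × ℕ // v ∈ vertexSet P} → ℕ × ℕ))
          (chainDet K P (c k).1 (c k).2.1 (c k).2.2)
          (vertexMonomial P (chainVerts (c k).1 (c k).2.1 (c k).2.2)) :=
    fun k => chainDet_initial K P _ _ _ (hchains k)
  refine ⟨hmain, ?_⟩
  have hprod := initial_prod
    (grevlexLT_irrefl (emb := (Subtype.val : {v : ℕ × ℕ // v ∈ vertexSet P} → ℕ × ℕ)))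
    (fun {μ ν ρ} h1 h2 => grevlexLT_trans Subtype.val_injective h1 h2)
    (fun {μ ν} τ h1 => grevlexLT_add_right τ h1)
    Finset.univ
    (fun k : Fin s => chainDet K P (c k).1 (c k).2.1 (c k).2.2)
    (fun k : Fin s => vertexMonomial P (chainVerts (c k).1 (c k).2.1 (c k).2.2))
    (fun k _ => (hmain k).2)
  have hsum : (∑ k : Fin s, vertexMonomial P (chainVerts (c k).1 (c k).2.1 (c k).2.2))
      = vertexMonomial P (vertexSet P) := by
    ext w
    rw [Finsupp.finset_sum_apply]
    simp only [vertexMonomial_apply]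
    rw [if_pos w.2]
    obtain ⟨k₀, hk₀⟩ : ∃ k₀ : Fin s,
        (w : ℕ × ℕ) ∈ chainVerts (c k₀).1 (c k₀).2.1 (c k₀).2.2 := by
      have hw : (w : ℕ × ℕ) ∈ Finset.univ.biUnion
          (fun k : Fin s => chainVerts (c k).1 (c k).2.1 (c k).2.2) := by
        rw [hcover]; exact w.2
      obtain ⟨k₀, -, hk₀⟩ := Finset.mem_biUnion.mp hw
      exact ⟨k₀, hk₀⟩
    rw [Finset.sum_eq_single k₀]
    · rw [if_pos hk₀]
    · intro k _ hkne
      rw [if_neg]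
      intro hmem
      exact Finset.disjoint_left.mp (hdisj k k₀ hkne) hmem hk₀
    · intro h; exact absurd (Finset.mem_univ _) h
  rwa [hsum] at hprod
end

section
/- For every integer n ≥ 2, every integer l with 2 ≤ l ≤ n, and every permutation σ of {1, …, n}, at least one of the following holds: (a) there exists an integer i with 1 ≤ i < l such that l + max(σ(i), σ(l)) ≤ n + 2; (b) there exist integers i, j with 1 ≤ i < j ≤ n such that j + max(σ(i), σ(j)) ≤ n + 1. -/
open MvPolynomial

universe u v

/-- For every `n ≥ 2`, every `2 ≤ l ≤ n` and every permutation `σ` of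
`{1, …, n}`, either there is `i < l` with `l + max (σ i) (σ l) ≤ n + 2`, or there are
`i < j` with `j + max (σ i) (σ j) ≤ n + 1`. -/
theorem chi_property (n l : ℕ) (hn : 2 ≤ n) (hl : 2 ≤ l) (hln : l ≤ n)
    (σ : ℕ → ℕ) (hσ : Set.BijOn σ (Set.Icc 1 n) (Set.Icc 1 n)) :
    (∃ i : ℕ, 1 ≤ i ∧ i < l ∧ l + max (σ i) (σ l) ≤ n + 2) ∨
      (∃ i j : ℕ, 1 ≤ i ∧ i < j ∧ j ≤ n ∧ j + max (σ i) (σ j) ≤ n + 1) := by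
  by_contra hcon
  push_neg at hcon
  obtain ⟨h1, h2⟩ := hcon
  set m : ℕ := n + 2 - l with hm
  have hlm : l + m = n + 2 := by omega
  have hm2 : 2 ≤ m := by omega
  have hmn : m ≤ n := by omega
  set T : Finset ℕ := (Finset.Icc 1 n).filter (fun i => σ i ≤ m) with hTdef
  have hmaps : ∀ a ∈ Set.Icc 1 n, 1 ≤ σ a ∧ σ a ≤ n := by
    intro a ha
    have := hσ.mapsTo ha
    simpa [Set.mem_Icc] using this
  have hT : T.card = m := by
    have : m = (Finset.Icc 1 m).card := by rw [Nat.card_Icc]; omega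
    rw [this]
    apply Finset.card_bij (fun a _ => σ a)
    · intro a ha
      simp only [hTdef, Finset.mem_filter, Finset.mem_Icc] at ha ⊢
      have := hmaps a (by simp [Set.mem_Icc]; omega)
      omega
    · intro a ha b hb hab
      simp only [hTdef, Finset.mem_filter, Finset.mem_Icc] at ha hb
      exact hσ.injOn (by simp [Set.mem_Icc]; omega) (by simp [Set.mem_Icc]; omega) hab
    · intro v hv
      simp only [Finset.mem_Icc] at hv
      obtain ⟨a, ha, hav⟩ := hσ.surjOn (show v ∈ Set.Icc 1 n by simp [Set.mem_Icc]; omega)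
      simp only [Set.mem_Icc] at ha
      refine ⟨a, ?_, hav⟩
      simp only [hTdef, Finset.mem_filter, Finset.mem_Icc]
      omega
  set S : Finset ℕ := T.filter (fun i => i < l) with hSdef
  have hsplit : S.card + (T.filter (fun i => ¬ i < l)).card = T.card :=
    Finset.card_filter_add_card_filter_not _
  have hSmem : ∀ i ∈ S, 1 ≤ i ∧ i < l ∧ σ i ≤ m := by
    intro i hi
    simp only [hSdef, hTdef, Finset.mem_filter, Finset.mem_Icc] at hi
    omega
  by_cases hσl : σ l ≤ m
  · -- then enough that S is nonempty
    have hsub : T.filter (fun i => ¬ i < l) ⊆ Finset.Icc l n := by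
      intro i hi
      simp only [hTdef, Finset.mem_filter, Finset.mem_Icc] at hi ⊢
      omega
    have hle : (T.filter (fun i => ¬ i < l)).card ≤ n - l + 1 := by
      have := Finset.card_le_card hsub
      rw [Nat.card_Icc] at this
      omega
    have hS1 : 1 ≤ S.card := by omega
    obtain ⟨i, hi⟩ := Finset.card_pos.mp (show 0 < S.card by omega)
    obtain ⟨hi1, hil, hiσ⟩ := hSmem i hi
    have := h1 i hi1 hil
    omega
  · -- l ∉ T, so the tail has at most n - l elements, hence S has ≥ 2
    have hsub : T.filter (fun i => ¬ i < l) ⊆ Finset.Icc (l + 1) n := by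
      intro i hi
      simp only [hTdef, Finset.mem_filter, Finset.mem_Icc] at hi ⊢
      rcases Nat.eq_or_lt_of_le (Nat.not_lt.mp hi.2) with h | h
      · exact absurd (h ▸ hi.1.2) hσl
      · omega
    have hle : (T.filter (fun i => ¬ i < l)).card ≤ n - l := by
      have := Finset.card_le_card hsub
      rw [Nat.card_Icc] at this
      omega
    have hS2 : 2 ≤ S.card := by omega
    obtain ⟨a, ha, b, hb, hab⟩ := Finset.one_lt_card.mp (show 1 < S.card by omega)
    obtain ⟨ha1, hal, haσ⟩ := hSmem a ha
    obtain ⟨hb1, hbl, hbσ⟩ := hSmem b hb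
    rcases Nat.lt_or_ge a b with h | h
    · have := h2 a b ha1 h (by omega)
      omega
    · have := h2 b a hb1 (by omega) (by omega)
      omega
end

section
/- Fix integers n ≥ 2 and l with 2 ≤ l ≤ n. For a permutation σ of {1, …, n}, let S(n,l,σ) = {(i,j) : 1 ≤ i < j ≤ n, and either (j = l and l + max(σ(i), σ(l)) ≤ n + 2) or j + max(σ(i), σ(j)) ≤ n + 1}; this set is nonempty, and let (i_σ, j_σ) denote its minimum element with respect to the graded lexicographic order on ℕ² (where (i,j) precedes (i',j') iff i + j < i' + j', or i + j = i' + j' and i < i'). Then (i_σ, j_σ) is the minimum element of S(n, l, σ ∘ (i_σ j_σ)), where (i_σ j_σ) denotes the transposition of {1, …, n} exchanging i_σ and j_σ. -/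
open MvPolynomial

universe u v

/-- The set `S(n, l, σ)` of pairs `(i, j)`. -/
def Sset (n l : ℕ) (σ : ℕ → ℕ) : Set (ℕ × ℕ) :=
  {p | 1 ≤ p.1 ∧ p.1 < p.2 ∧ p.2 ≤ n ∧
    ((p.2 = l ∧ l + max (σ p.1) (σ l) ≤ n + 2) ∨ p.2 + max (σ p.1) (σ p.2) ≤ n + 1)}

/-- The graded lexicographic order on ℕ². -/
def GLexLE (p q : ℕ × ℕ) : Prop :=
  p.1 + p.2 < q.1 + q.2 ∨ (p.1 + p.2 = q.1 + q.2 ∧ p.1 ≤ q.1)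

/-- `S(n,l,σ)` is nonempty, and if `(i₀, j₀)` is its minimum with
respect to the graded lexicographic order, then `(i₀, j₀)` is also the minimum of
`S(n, l, σ ∘ (i₀ j₀))`. -/
theorem Sset_min_swap (n l : ℕ) (hn : 2 ≤ n) (hl : 2 ≤ l) (hln : l ≤ n)
    (σ : ℕ → ℕ) (hσ : Set.BijOn σ (Set.Icc 1 n) (Set.Icc 1 n))
    (i₀ j₀ : ℕ) (hmem : (i₀, j₀) ∈ Sset n l σ)
    (hmin : ∀ q ∈ Sset n l σ, GLexLE (i₀, j₀) q) :
    (Sset n l σ).Nonempty ∧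
      (i₀, j₀) ∈ Sset n l (σ ∘ (Equiv.swap i₀ j₀)) ∧
      ∀ q ∈ Sset n l (σ ∘ (Equiv.swap i₀ j₀)), GLexLE (i₀, j₀) q := by
  have hmem' := hmem
  simp only [Sset, Set.mem_setOf_eq] at hmem'
  obtain ⟨hi1, hij, hjn, hcond⟩ := hmem'
  have hs1 : (σ ∘ Equiv.swap i₀ j₀) i₀ = σ j₀ := by simp
  have hs2 : (σ ∘ Equiv.swap i₀ j₀) j₀ = σ i₀ := by simp
  have hsw : ∀ x, x ≠ i₀ → x ≠ j₀ → (σ ∘ Equiv.swap i₀ j₀) x = σ x := by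
    intro x h1 h2
    simp [Function.comp, Equiv.swap_apply_of_ne_of_ne h1 h2]
  -- key bound from membership of (i₀, j₀)
  have hK : σ i₀ + j₀ ≤ n + 2 := by
    rcases hcond with ⟨hjl, hle⟩ | hle
    · subst hjl; omega
    · omega
  have hK2 : σ i₀ + i₀ ≤ n + 1 := by omega
  refine ⟨⟨(i₀, j₀), hmem⟩, ?_, ?_⟩
  · -- membership of (i₀, j₀) in the swapped set
    simp only [Sset, Set.mem_setOf_eq]
    refine ⟨hi1, hij, hjn, ?_⟩
    rcases hcond with ⟨hjl, hle⟩ | hle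
    · left
      refine ⟨hjl, ?_⟩
      rw [← hjl, hs1, hs2]
      rw [← hjl] at hle
      omega
    · right
      rw [hs1, hs2]
      omega
  · rintro ⟨i, j⟩ hq
    simp only [Sset, Set.mem_setOf_eq] at hq
    obtain ⟨hq1, hqij, hqjn, hqc⟩ := hq
    by_contra hcon
    simp only [GLexLE, not_or, not_and, not_lt, not_le] at hcon
    have hlt : i + j < i₀ + j₀ ∨ (i + j = i₀ + j₀ ∧ i < i₀) := by omega
    -- `i = j₀` is impossible
    have hij0 : i ≠ j₀ := fun h => by omega
    have key : ∀ a b : ℕ, 1 ≤ a → a < b → b ≤ n →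
        ((b = l ∧ l + max (σ a) (σ l) ≤ n + 2) ∨ b + max (σ a) (σ b) ≤ n + 1) →
        GLexLE (i₀, j₀) (a, b) := by
      intro a b h1 h2 h3 h4
      exact hmin (a, b) (by simp only [Sset, Set.mem_setOf_eq]; exact ⟨h1, h2, h3, h4⟩)
    rcases eq_or_ne i₀ j with rfl | hji0
    · -- Case j = i₀ : use the pair (i, i₀) in S(σ)
      have hii0 : i ≠ i₀ := by omega
      rw [hsw i hii0 hij0, hs1] at hqc
      have : GLexLE (i₀, j₀) (i, i₀) := by
        refine key i i₀ hq1 hqij (by omega) ?_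
        rcases hqc with ⟨hjl, hle⟩ | hle
        · left
          refine ⟨hjl, ?_⟩
          rw [← hjl] at hle ⊢
          rw [hs1] at hle
          omega
        · right; omega
      simp only [GLexLE] at this
      omega
    · rcases eq_or_ne j₀ j with rfl | hjj0
      · -- Case j = j₀, i < i₀ : use the pair (i, i₀) in S(σ)
        have hii0 : i ≠ i₀ := fun h => by omega
        have hii0' : i < i₀ := by omega
        rw [hsw i hii0 hij0, hs2] at hqc
        have hsib : σ i + i₀ ≤ n + 1 := by
          rcases hqc with ⟨hjl, hle⟩ | hle
          · rw [← hjl] at hle; omega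
          · omega
        have : GLexLE (i₀, j₀) (i, i₀) := by
          refine key i i₀ hq1 hii0' (by omega) (Or.inr ?_)
          omega
        simp only [GLexLE] at this
        omega
      · rcases eq_or_ne i₀ i with rfl | hii0
        · -- Case i = i₀, j < j₀ : use the pair (i₀, j) in S(σ)
          have hjlt : j < j₀ := by
            rcases hlt with h | ⟨_, h⟩ <;> omega
          have hji0' : j ≠ i₀ := fun h => (hji0 h.symm)
          have hjj0' : j ≠ j₀ := fun h => (hjj0 h.symm)
          rw [hs1, hsw j hji0' hjj0'] at hqc
          have : GLexLE (i₀, j₀) (i₀, j) := by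
            refine key i₀ j hq1 hqij hqjn ?_
            rcases hqc with ⟨hjl, hle⟩ | hle
            · left
              refine ⟨hjl, ?_⟩
              rw [← hjl] at hle ⊢
              rw [hsw j hji0' hjj0'] at hle
              omega
            · right; omega
          simp only [GLexLE] at this
          omega
        · -- Case all indices distinct : (i, j) itself lies in S(σ)
          have hii0' : i ≠ i₀ := fun h => (hii0 h.symm)
          have hji0' : j ≠ i₀ := fun h => (hji0 h.symm)
          have hjj0' : j ≠ j₀ := fun h => (hjj0 h.symm)
          rw [hsw i hii0' hij0, hsw j hji0' hjj0'] at hqc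
          have : GLexLE (i₀, j₀) (i, j) := by
            refine key i j hq1 hqij hqjn ?_
            rcases hqc with ⟨hjl, hle⟩ | hle
            · left
              refine ⟨hjl, ?_⟩
              rw [← hjl] at hle ⊢
              rw [hsw j hji0' hjj0'] at hle
              exact hle
            · right; exact hle
          simp only [GLexLE] at this
          omega
end

section
/- Let K be a field and k ≥ 2 an integer. Let P be a horizontally convex polyomino that contains every cell with lower-left vertex (l,m) where l, m ≥ 1 and l + m ≤ k. Let P_{k−1} denote the sub-collection of cells of P whose lower-left vertex (l,m) satisfies l + m ≤ k − 1, and for 1 ≤ l ≤ k − 1 let C_{k,l} denote the cell with lower-left vertex (l, k − l). In S = K[x_v : v ∈ V(P)], let M be the k × k matrix whose (a,b) entry (1 ≤ a, b ≤ k) is x_{(a,b)} if (a,b) ∈ V(P) and 0 otherwise, and set f_k = det M. Then f_k ∉ I_{P_{k−1}}, and f_k ∈ I_{P_{k−1} ∪ {C_{k,l}}} for every 1 ≤ l ≤ k − 1. -/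
open MvPolynomial

universe u v

open Finset Equiv MvPolynomial

namespace ChainDetAux

/-- good rectangle condition in ℕ (0-indexed rows/cols). -/
def GoodN (k l r1 r2 c1 c2 : ℕ) : Prop :=
  (max r1 r2 + max c1 c2 + 2 ≤ k + 1) ∨ (max r1 r2 = l ∧ max c1 c2 + l = k)

instance GoodN.dec (k l r1 r2 c1 c2 : ℕ) : Decidable (GoodN k l r1 r2 c1 c2) := by
  unfold GoodN; infer_instance

def Good (k l : ℕ) (σ : Equiv.Perm (Fin k)) (i j : Fin k) : Prop :=
  GoodN k l (σ i) (σ j) i j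

instance Good.dec (k l : ℕ) (σ : Equiv.Perm (Fin k)) (i j : Fin k) :
    Decidable (Good k l σ i j) := by unfold Good; infer_instance

def lowN (k l J r : ℕ) : Prop := (r + J + 2 ≤ k + 1) ∨ (r ≤ l ∧ J + l = k)

instance lowN.dec (k l J r : ℕ) : Decidable (lowN k l J r) := by
  unfold lowN; infer_instance

lemma good_symm {k l : ℕ} {σ : Equiv.Perm (Fin k)} {i j : Fin k}
    (h : Good k l σ i j) : Good k l σ j i := by
  unfold Good GoodN at h ⊢; omega

lemma goodN_iff_low {k l : ℕ} (J : ℕ) {r1 r2 c1 c2 : ℕ} (h : max c1 c2 = J) :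
    GoodN k l r1 r2 c1 c2 ↔ lowN k l J r1 ∧ lowN k l J r2 := by
  unfold GoodN lowN; omega

/-- cardinality helper -/
lemma card_filter_val_lt (k c : ℕ) (hc : c ≤ k) :
    ((Finset.univ : Finset (Fin k)).filter (fun i : Fin k => (i : ℕ) < c)).card = c := by
  have h : ∀ m ∈ Finset.range c, m < k := fun m hm => lt_of_lt_of_le (mem_range.mp hm) hc
  have : ((Finset.univ : Finset (Fin k)).filter (fun i : Fin k => (i : ℕ) < c)) =
      (Finset.range c).attachFin h := by
    ext i; simp [Finset.mem_attachFin]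
  rw [this, Finset.card_attachFin, Finset.card_range]

lemma card_filter_val_lt' (k c : ℕ) (hc : c ≤ k) :
    ((Finset.univ : Finset (Fin k)).filter (fun i : Fin k => c ≤ (i : ℕ))).card = k - c := by
  have h := Finset.card_filter_add_card_filter_not
    (s := (Finset.univ : Finset (Fin k))) (fun i : Fin k => (i : ℕ) < c)
  rw [Finset.card_univ, Fintype.card_fin, card_filter_val_lt k c hc] at h
  have he : (Finset.univ.filter (fun a : Fin k => ¬ ((a : ℕ) < c))) =
      (Finset.univ.filter (fun i : Fin k => c ≤ (i : ℕ))) := by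
    ext i
    simp only [Finset.mem_filter, Finset.mem_univ, true_and, not_lt]
  rw [he] at h
  omega

lemma stepA {k : ℕ} (σ : Equiv.Perm (Fin k))
    (hA : ∀ i j : Fin k, i ≠ j → k ≤ max (σ i : ℕ) (σ j : ℕ) + max (i : ℕ) (j : ℕ)) :
    ∀ p : Fin k, (σ p : ℕ) + (p : ℕ) ≤ k := by
  intro p
  by_contra hcon
  push_neg at hcon
  have hpk := p.isLt
  have hσpk := (σ p).isLt
  have hp1 : 1 ≤ (p : ℕ) := by omega
  set j : ℕ := (p : ℕ) - 1 with hj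
  set s : Finset (Fin k) := Finset.univ.filter (fun i => (i : ℕ) ≤ j) with hs
  set B : Finset (Fin k) := s.filter (fun i => (σ i : ℕ) + j < k) with hB
  set C : Finset (Fin k) := s.filter (fun i => ¬ ((σ i : ℕ) + j < k)) with hC
  have hsplit : B.card + C.card = s.card :=
    Finset.card_filter_add_card_filter_not (fun i : Fin k => (σ i : ℕ) + j < k)
  have hBcard : B.card ≤ 1 := by
    rw [Finset.card_le_one]
    intro a ha b hb
    by_contra hab
    have hAab := hA a b hab
    simp only [hB, hs, Finset.mem_filter, Finset.mem_univ, true_and] at ha hb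
    omega
  have hscard : s.card = j + 1 := by
    have : s = Finset.univ.filter (fun i : Fin k => (i : ℕ) < j + 1) := by
      ext i
      simp only [hs, Finset.mem_filter, Finset.mem_univ, true_and]
      omega
    rw [this, card_filter_val_lt k (j+1) (by omega)]
  set V : Finset (Fin k) := Finset.univ.filter (fun v => k ≤ (v : ℕ) + j) with hV
  have hVcard : V.card = j := by
    have : V = Finset.univ.filter (fun v : Fin k => (k - j : ℕ) ≤ (v : ℕ)) := by
      ext v
      simp only [hV, Finset.mem_filter, Finset.mem_univ, true_and]
      omega
    rw [this, card_filter_val_lt' k (k - j) (by omega)]; omega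
  set D : Finset (Fin k) := insert (σ p) (C.image σ) with hD
  have hDV : D ⊆ V := by
    intro r hr
    simp only [hD, Finset.mem_insert, Finset.mem_image] at hr
    simp only [hV, Finset.mem_filter, Finset.mem_univ, true_and]
    rcases hr with rfl | ⟨i, hi, rfl⟩
    · omega
    · simp only [hC, hs, Finset.mem_filter, Finset.mem_univ, true_and] at hi
      omega
  have hnotmem : σ p ∉ C.image σ := by
    intro hmem
    obtain ⟨i, hi, hip⟩ := Finset.mem_image.mp hmem
    have : i = p := σ.injective hip
    subst this
    simp only [hC, hs, Finset.mem_filter, Finset.mem_univ, true_and] at hi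
    omega
  have hDcard : D.card = C.card + 1 := by
    rw [hD, Finset.card_insert_of_notMem hnotmem,
      Finset.card_image_of_injective _ σ.injective]
  have := Finset.card_le_card hDV
  omega

lemma exists_good {k l : ℕ} (hk : 2 ≤ k) (hl1 : 1 ≤ l) (hlk : l + 1 ≤ k)
    (σ : Equiv.Perm (Fin k)) : ∃ i j : Fin k, i ≠ j ∧ Good k l σ i j := by
  by_contra hcon
  push_neg at hcon
  have hA : ∀ i j : Fin k, i ≠ j → k ≤ max (σ i : ℕ) (σ j : ℕ) + max (i : ℕ) (j : ℕ) := by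
    intro i j hne
    have h := hcon i j hne
    unfold Good GoodN at h; omega
  have hS : ∀ i j : Fin k, i ≠ j →
      ¬ (max (σ i : ℕ) (σ j : ℕ) = l ∧ max (i : ℕ) (j : ℕ) + l = k) := by
    intro i j hne h
    exact hcon i j hne (Or.inr h)
  have hfull := stepA σ hA
  have hlk' : l < k := by omega
  set Lv : Fin k := ⟨l, hlk'⟩ with hLv
  set π : Fin k := σ.symm Lv with hπdef
  have hσπ : σ π = Lv := σ.apply_symm_apply Lv
  have hklk : k - l < k := by omega
  set J0 : Fin k := ⟨k - l, hklk⟩ with hJ0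
  by_cases hπ : π = J0
  · -- σ J0 = Lv
    have hσJ0 : σ J0 = Lv := by rw [← hπ]; exact hσπ
    set Vals : Finset (Fin k) := Finset.univ.filter (fun v => (v : ℕ) < l) with hVals
    have hValscard : Vals.card = l := card_filter_val_lt k l (by omega)
    set Cols : Finset (Fin k) := Vals.image σ.symm with hCols
    have hColscard : Cols.card = l := by
      rw [hCols, Finset.card_image_of_injective _ σ.symm.injective, hValscard]
    have hColssub : Cols ⊆ Finset.univ.filter (fun i : Fin k => k - l < (i : ℕ)) := by
      intro i hi
      obtain ⟨v, hv, rfl⟩ := Finset.mem_image.mp hi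
      simp only [hVals, Finset.mem_filter, Finset.mem_univ, true_and] at hv
      simp only [Finset.mem_filter, Finset.mem_univ, true_and]
      by_contra hle
      push_neg at hle
      have hne : σ.symm v ≠ J0 := by
        intro h
        have : v = σ J0 := by rw [← h, σ.apply_symm_apply]
        rw [hσJ0] at this
        subst this
        simp [hLv] at hv
      apply hS (σ.symm v) J0 hne
      rw [σ.apply_symm_apply, hσJ0]
      have h1 : (Lv : ℕ) = l := rfl
      have h2 : (J0 : ℕ) = k - l := rfl
      constructor
      · omega
      · omega
    have hle := Finset.card_le_card hColssub
    have hFcard : (Finset.univ.filter (fun i : Fin k => k - l < (i : ℕ))).card = l - 1 := by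
      have h := Finset.card_filter_add_card_filter_not
        (s := (Finset.univ : Finset (Fin k))) (fun i : Fin k => k - l < (i : ℕ))
      rw [Finset.card_univ, Fintype.card_fin] at h
      have he : (Finset.univ.filter (fun i : Fin k => ¬ (k - l < (i : ℕ)))) =
          (Finset.univ.filter (fun i : Fin k => (i : ℕ) < k - l + 1)) := by
        ext i; simp
      rw [he, card_filter_val_lt k (k - l + 1) (by omega)] at h
      omega
    omega
  · -- π ≠ J0
    apply hS π J0 hπ
    have h1 := hfull J0
    have h2 := hfull π
    rw [hσπ] at h2
    have hL : (Lv : ℕ) = l := rfl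
    have hJ : (J0 : ℕ) = k - l := rfl
    have hσJ0 : (σ J0 : ℕ) ≠ l := by
      intro h
      apply hπ
      apply σ.injective
      rw [hσπ]
      apply Fin.ext
      rw [h, hL]
    have hσJ0lt := (σ J0).isLt
    rw [hσπ]
    constructor
    · omega
    · omega

section Selection

variable {k l : ℕ}

open scoped Classical in
noncomputable def topSet (k l : ℕ) (σ : Equiv.Perm (Fin k)) : Finset (Fin k) :=
  Finset.univ.filter (fun j => ∃ i, i < j ∧ Good k l σ i j)

lemma topSet_nonempty (hk : 2 ≤ k) (hl1 : 1 ≤ l) (hlk : l + 1 ≤ k)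
    (σ : Equiv.Perm (Fin k)) : (topSet k l σ).Nonempty := by
  classical
  obtain ⟨i, j, hne, hgood⟩ := exists_good hk hl1 hlk σ
  rcases hne.lt_or_gt with h | h
  · exact ⟨j, Finset.mem_filter.mpr ⟨Finset.mem_univ _, ⟨i, h, hgood⟩⟩⟩
  · exact ⟨i, Finset.mem_filter.mpr ⟨Finset.mem_univ _, ⟨j, h, good_symm hgood⟩⟩⟩

variable (hk : 2 ≤ k) (hl1 : 1 ≤ l) (hlk : l + 1 ≤ k)

noncomputable def jstar (σ : Equiv.Perm (Fin k)) : Fin k :=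
  (topSet k l σ).max' (topSet_nonempty hk hl1 hlk σ)

lemma jstar_spec (σ : Equiv.Perm (Fin k)) :
    ∃ i, i < jstar hk hl1 hlk σ ∧ Good k l σ i (jstar hk hl1 hlk σ) := by
  classical
  have h := (topSet k l σ).max'_mem (topSet_nonempty hk hl1 hlk σ)
  simpa [jstar, topSet, Finset.mem_filter] using h

lemma jstar_max (σ : Equiv.Perm (Fin k)) (j : Fin k)
    (hj : ∃ i, i < j ∧ Good k l σ i j) : j ≤ jstar hk hl1 hlk σ := by
  classical
  have hmem : j ∈ topSet k l σ := Finset.mem_filter.mpr ⟨Finset.mem_univ _, hj⟩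
  unfold jstar
  exact Finset.le_max' _ _ hmem

open scoped Classical in
noncomputable def Wset (σ : Equiv.Perm (Fin k)) : Finset (Fin k) :=
  Finset.univ.filter (fun r =>
    lowN k l (jstar hk hl1 hlk σ : ℕ) (r : ℕ) ∧
      ((σ⁻¹ r : Fin k) : ℕ) ≤ (jstar hk hl1 hlk σ : ℕ))

lemma mem_Wset (σ : Equiv.Perm (Fin k)) (r : Fin k) :
    r ∈ Wset hk hl1 hlk σ ↔
      lowN k l (jstar hk hl1 hlk σ : ℕ) (r : ℕ) ∧
        ((σ⁻¹ r : Fin k) : ℕ) ≤ (jstar hk hl1 hlk σ : ℕ) := by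
  classical
  simp [Wset]

lemma one_lt_card_Wset (σ : Equiv.Perm (Fin k)) : 1 < (Wset hk hl1 hlk σ).card := by
  obtain ⟨i, hi, hgood⟩ := jstar_spec hk hl1 hlk σ
  set J := jstar hk hl1 hlk σ with hJ
  have hiJ : (i : ℕ) < (J : ℕ) := hi
  have hmax : max (i : ℕ) (J : ℕ) = (J : ℕ) := by omega
  have hlow := (goodN_iff_low (J : ℕ) hmax).mp hgood
  have h1 : σ i ∈ Wset hk hl1 hlk σ := by
    rw [mem_Wset]
    refine ⟨hlow.1, ?_⟩
    rw [show ∀ x, σ⁻¹ (σ x) = x from fun x => σ.symm_apply_apply x]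
    omega
  have h2 : σ J ∈ Wset hk hl1 hlk σ := by
    rw [mem_Wset]
    refine ⟨hlow.2, ?_⟩
    rw [show ∀ x, σ⁻¹ (σ x) = x from fun x => σ.symm_apply_apply x]
  have hne : σ i ≠ σ J := fun h => (ne_of_lt hi) (σ.injective h)
  exact Finset.one_lt_card.mpr ⟨σ i, h1, σ J, h2, hne⟩

lemma Wset_nonempty (σ : Equiv.Perm (Fin k)) : (Wset hk hl1 hlk σ).Nonempty :=
  Finset.card_pos.mp (by have := one_lt_card_Wset hk hl1 hlk σ; omega)

noncomputable def uu (σ : Equiv.Perm (Fin k)) : Fin k :=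
  (Wset hk hl1 hlk σ).max' (Wset_nonempty hk hl1 hlk σ)

lemma uu_mem (σ : Equiv.Perm (Fin k)) : uu hk hl1 hlk σ ∈ Wset hk hl1 hlk σ := by
  unfold uu
  exact Finset.max'_mem _ _

lemma erase_uu_nonempty (σ : Equiv.Perm (Fin k)) :
    ((Wset hk hl1 hlk σ).erase (uu hk hl1 hlk σ)).Nonempty := by
  apply Finset.card_pos.mp
  rw [Finset.card_erase_of_mem (uu_mem hk hl1 hlk σ)]
  have := one_lt_card_Wset hk hl1 hlk σ
  omega

noncomputable def vv (σ : Equiv.Perm (Fin k)) : Fin k :=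
  ((Wset hk hl1 hlk σ).erase (uu hk hl1 hlk σ)).max' (erase_uu_nonempty hk hl1 hlk σ)

lemma vv_mem_erase (σ : Equiv.Perm (Fin k)) :
    vv hk hl1 hlk σ ∈ (Wset hk hl1 hlk σ).erase (uu hk hl1 hlk σ) := by
  unfold vv
  exact Finset.max'_mem _ _

lemma vv_mem (σ : Equiv.Perm (Fin k)) : vv hk hl1 hlk σ ∈ Wset hk hl1 hlk σ :=
  (Finset.mem_erase.mp (vv_mem_erase hk hl1 hlk σ)).2

lemma vv_ne_uu (σ : Equiv.Perm (Fin k)) : vv hk hl1 hlk σ ≠ uu hk hl1 hlk σ :=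
  (Finset.mem_erase.mp (vv_mem_erase hk hl1 hlk σ)).1

noncomputable def iota (σ : Equiv.Perm (Fin k)) : Equiv.Perm (Fin k) :=
  σ * Equiv.swap (σ⁻¹ (uu hk hl1 hlk σ)) (σ⁻¹ (vv hk hl1 hlk σ))

lemma swap_cols_ne (σ : Equiv.Perm (Fin k)) :
    σ⁻¹ (uu hk hl1 hlk σ) ≠ σ⁻¹ (vv hk hl1 hlk σ) := by
  intro h
  exact vv_ne_uu hk hl1 hlk σ (σ⁻¹.injective h.symm)

lemma good_uv (σ : Equiv.Perm (Fin k)) :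
    Good k l σ (σ⁻¹ (uu hk hl1 hlk σ)) (σ⁻¹ (vv hk hl1 hlk σ)) := by
  have hu := (mem_Wset hk hl1 hlk σ _).mp (uu_mem hk hl1 hlk σ)
  have hv := (mem_Wset hk hl1 hlk σ _).mp (vv_mem hk hl1 hlk σ)
  unfold Good
  rw [show ∀ x, σ (σ⁻¹ x) = x from fun x => σ.apply_symm_apply x,
    show ∀ x, σ (σ⁻¹ x) = x from fun x => σ.apply_symm_apply x]
  obtain ⟨hlu, hcu⟩ := hu
  obtain ⟨hlv, hcv⟩ := hv
  unfold lowN at hlu hlv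
  unfold GoodN
  omega

lemma jstar_iota (σ : Equiv.Perm (Fin k)) :
    jstar hk hl1 hlk (iota hk hl1 hlk σ) = jstar hk hl1 hlk σ := by
  set J := jstar hk hl1 hlk σ with hJdef
  set u := uu hk hl1 hlk σ with hu
  set v := vv hk hl1 hlk σ with hv
  set i1 := σ⁻¹ u with hi1
  set i2 := σ⁻¹ v with hi2
  set s := Equiv.swap i1 i2 with hsdef
  have hi12 : i1 ≠ i2 := swap_cols_ne hk hl1 hlk σ
  have happ : ∀ x, (iota hk hl1 hlk σ) x = σ (s x) := fun x => rfl
  have hs1 : s i1 = i2 := Equiv.swap_apply_left _ _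
  have hs2 : s i2 = i1 := Equiv.swap_apply_right _ _
  have hso : ∀ x, x ≠ i1 → x ≠ i2 → s x = x := fun x h1 h2 =>
    Equiv.swap_apply_of_ne_of_ne h1 h2
  have hmemu := (mem_Wset hk hl1 hlk σ _).mp (uu_mem hk hl1 hlk σ)
  have hmemv := (mem_Wset hk hl1 hlk σ _).mp (vv_mem hk hl1 hlk σ)
  have hlu : lowN k l (J : ℕ) (u : ℕ) := hmemu.1
  have hlv : lowN k l (J : ℕ) (v : ℕ) := hmemv.1
  have hi1J : (i1 : ℕ) ≤ (J : ℕ) := hmemu.2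
  have hi2J : (i2 : ℕ) ≤ (J : ℕ) := hmemv.2
  have hσi1 : σ i1 = u := σ.apply_symm_apply u
  have hσi2 : σ i2 = v := σ.apply_symm_apply v
  obtain ⟨i0, hi0, hgood0⟩ := jstar_spec hk hl1 hlk σ
  have hlowJ : lowN k l (J : ℕ) ((σ J : Fin k) : ℕ) := by
    have hmax : max (i0 : ℕ) (J : ℕ) = (J : ℕ) := by
      have : (i0 : ℕ) < (J : ℕ) := hi0
      omega
    exact ((goodN_iff_low (J : ℕ) hmax).mp hgood0).2
  apply le_antisymm
  · -- jstar (iota σ) ≤ J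
    by_contra hgt
    push_neg at hgt
    set σ' := iota hk hl1 hlk σ with hσ'
    set J' := jstar hk hl1 hlk σ' with hJ'def
    obtain ⟨i, hi, hgood'⟩ := jstar_spec hk hl1 hlk σ'
    have hJJ' : (J : ℕ) < (J' : ℕ) := hgt
    have hne1 : J' ≠ i1 := by
      intro h
      rw [h] at hJJ'
      omega
    have hne2 : J' ≠ i2 := by
      intro h
      rw [h] at hJJ'
      omega
    have hsJ' : s J' = J' := hso J' hne1 hne2
    have hsiltJ' : ((s i : Fin k) : ℕ) < (J' : ℕ) := by
      by_cases h1 : i = i1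
      · rw [h1, hs1]; omega
      · by_cases h2 : i = i2
        · rw [h2, hs2]; omega
        · rw [hso i h1 h2]; exact hi
    have hgoodσ : Good k l σ (s i) J' := by
      have e1 : σ' i = σ (s i) := happ i
      have e2 : σ' J' = σ J' := by rw [happ J', hsJ']
      unfold Good at hgood' ⊢
      rw [e1, e2] at hgood'
      have hm1 : max (i : ℕ) (J' : ℕ) = (J' : ℕ) := by
        have : (i : ℕ) < (J' : ℕ) := hi
        omega
      have hm2 : max ((s i : Fin k) : ℕ) (J' : ℕ) = (J' : ℕ) := by omega
      rw [goodN_iff_low (J' : ℕ) hm1] at hgood'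
      rw [goodN_iff_low (J' : ℕ) hm2]
      exact hgood'
    have : J' ≤ J := jstar_max hk hl1 hlk σ J'
      ⟨s i, by exact_mod_cast hsiltJ', hgoodσ⟩
    omega
  · -- J ≤ jstar (iota σ)
    apply jstar_max hk hl1 hlk
    set σ' := iota hk hl1 hlk σ with hσ'
    by_cases hJ1 : J = i1
    · -- σ' J = σ (s i1) = v ; use i2 < J
      have hi2ne : i2 ≠ J := fun h => hi12 (hJ1 ▸ h ▸ rfl)
      have hi2lt : (i2 : ℕ) < (J : ℕ) := by
        have : (i2 : ℕ) ≠ (J : ℕ) := fun h => hi2ne (Fin.ext h)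
        omega
      refine ⟨i2, by exact_mod_cast hi2lt, ?_⟩
      have e1 : σ' i2 = u := by rw [happ, hs2, hσi1]
      have e2 : σ' J = v := by rw [happ, hJ1, hs1, hσi2]
      unfold Good
      rw [e1, e2]
      have hm : max (i2 : ℕ) (J : ℕ) = (J : ℕ) := by omega
      rw [goodN_iff_low (J : ℕ) hm]
      exact ⟨hlu, hlv⟩
    · by_cases hJ2 : J = i2
      · have hi1ne : i1 ≠ J := fun h => hi12 (by rw [h, hJ2])
        have hi1lt : (i1 : ℕ) < (J : ℕ) := by
          have : (i1 : ℕ) ≠ (J : ℕ) := fun h => hi1ne (Fin.ext h)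
          omega
        refine ⟨i1, by exact_mod_cast hi1lt, ?_⟩
        have e1 : σ' i1 = v := by rw [happ, hs1, hσi2]
        have e2 : σ' J = u := by rw [happ, hJ2, hs2, hσi1]
        unfold Good
        rw [e1, e2]
        have hm : max (i1 : ℕ) (J : ℕ) = (J : ℕ) := by omega
        rw [goodN_iff_low (J : ℕ) hm]
        exact ⟨hlv, hlu⟩
      · -- J ∉ {i1, i2} : σ' J = σ J ; use i1 < J
        have hi1ne : i1 ≠ J := fun h => hJ1 h.symm
        have hi1lt : (i1 : ℕ) < (J : ℕ) := by
          have : (i1 : ℕ) ≠ (J : ℕ) := fun h => hi1ne (Fin.ext h)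
          omega
        refine ⟨i1, by exact_mod_cast hi1lt, ?_⟩
        have e1 : σ' i1 = v := by rw [happ, hs1, hσi2]
        have e2 : σ' J = σ J := by
          rw [happ, hso J (fun h => hJ1 h) (fun h => hJ2 h)]
        unfold Good
        rw [e1, e2]
        have hm : max (i1 : ℕ) (J : ℕ) = (J : ℕ) := by omega
        rw [goodN_iff_low (J : ℕ) hm]
        exact ⟨hlv, hlowJ⟩

lemma Wset_iota (σ : Equiv.Perm (Fin k)) :
    Wset hk hl1 hlk (iota hk hl1 hlk σ) = Wset hk hl1 hlk σ := by
  set J := jstar hk hl1 hlk σ with hJdef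
  set u := uu hk hl1 hlk σ with hu
  set v := vv hk hl1 hlk σ with hv
  set i1 := σ⁻¹ u with hi1
  set i2 := σ⁻¹ v with hi2
  set s := Equiv.swap i1 i2 with hsdef
  have hmemu := (mem_Wset hk hl1 hlk σ _).mp (uu_mem hk hl1 hlk σ)
  have hmemv := (mem_Wset hk hl1 hlk σ _).mp (vv_mem hk hl1 hlk σ)
  have hi1J : (i1 : ℕ) ≤ (J : ℕ) := hmemu.2
  have hi2J : (i2 : ℕ) ≤ (J : ℕ) := hmemv.2
  ext r
  rw [mem_Wset, mem_Wset, jstar_iota hk hl1 hlk σ]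
  have hsinv : s⁻¹ = s := by rw [hsdef]; exact Equiv.swap_inv i1 i2
  have hinv : (iota hk hl1 hlk σ)⁻¹ r = s (σ⁻¹ r) := by
    show (σ * s)⁻¹ r = s (σ⁻¹ r)
    rw [mul_inv_rev, Equiv.Perm.mul_apply, hsinv]
  rw [hinv]
  constructor
  · rintro ⟨h1, h2⟩
    refine ⟨h1, ?_⟩
    by_cases e1 : σ⁻¹ r = i1
    · rw [e1]; exact hi1J
    · by_cases e2 : σ⁻¹ r = i2
      · rw [e2]; exact hi2J
      · rwa [Equiv.swap_apply_of_ne_of_ne e1 e2] at h2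
  · rintro ⟨h1, h2⟩
    refine ⟨h1, ?_⟩
    by_cases e1 : σ⁻¹ r = i1
    · rw [e1, Equiv.swap_apply_left]; exact hi2J
    · by_cases e2 : σ⁻¹ r = i2
      · rw [e2, Equiv.swap_apply_right]; exact hi1J
      · rwa [Equiv.swap_apply_of_ne_of_ne e1 e2]

lemma max'_congr {α : Type*} [LinearOrder α] {s t : Finset α} (h : s = t)
    (hs : s.Nonempty) : s.max' hs = t.max' (h ▸ hs) := by subst h; rfl

lemma uu_iota (σ : Equiv.Perm (Fin k)) :
    uu hk hl1 hlk (iota hk hl1 hlk σ) = uu hk hl1 hlk σ := by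
  unfold uu
  exact max'_congr (Wset_iota hk hl1 hlk σ) _

lemma vv_iota (σ : Equiv.Perm (Fin k)) :
    vv hk hl1 hlk (iota hk hl1 hlk σ) = vv hk hl1 hlk σ := by
  unfold vv
  have h := Wset_iota hk hl1 hlk σ
  have h2 : (Wset hk hl1 hlk (iota hk hl1 hlk σ)).erase (uu hk hl1 hlk (iota hk hl1 hlk σ))
      = (Wset hk hl1 hlk σ).erase (uu hk hl1 hlk σ) := by
    rw [h, uu_iota hk hl1 hlk σ]
  exact max'_congr h2 _

lemma iota_iota (σ : Equiv.Perm (Fin k)) :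
    iota hk hl1 hlk (iota hk hl1 hlk σ) = σ := by
  set u := uu hk hl1 hlk σ with hu
  set v := vv hk hl1 hlk σ with hv
  set i1 := σ⁻¹ u with hi1
  set i2 := σ⁻¹ v with hi2
  set s := Equiv.swap i1 i2 with hsdef
  have h1 : (iota hk hl1 hlk σ)⁻¹ (uu hk hl1 hlk (iota hk hl1 hlk σ)) = i2 := by
    rw [uu_iota hk hl1 hlk σ]
    show (σ * s)⁻¹ u = i2
    rw [mul_inv_rev, Equiv.Perm.mul_apply, Equiv.swap_inv]
    show s (σ⁻¹ u) = i2
    rw [← hi1, Equiv.swap_apply_left]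
  have h2 : (iota hk hl1 hlk σ)⁻¹ (vv hk hl1 hlk (iota hk hl1 hlk σ)) = i1 := by
    rw [vv_iota hk hl1 hlk σ]
    show (σ * s)⁻¹ v = i1
    rw [mul_inv_rev, Equiv.Perm.mul_apply, Equiv.swap_inv]
    show s (σ⁻¹ v) = i1
    rw [← hi2, Equiv.swap_apply_right]
  show (iota hk hl1 hlk σ) * Equiv.swap _ _ = σ
  rw [h1, h2]
  show (σ * s) * Equiv.swap i2 i1 = σ
  rw [Equiv.swap_comm i2 i1, ← hsdef, mul_assoc]
  rw [Equiv.swap_mul_self]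
  rw [mul_one]

lemma iota_ne (σ : Equiv.Perm (Fin k)) : iota hk hl1 hlk σ ≠ σ := by
  intro h
  set u := uu hk hl1 hlk σ with hu
  set v := vv hk hl1 hlk σ with hv
  set i1 := σ⁻¹ u with hi1
  set i2 := σ⁻¹ v with hi2
  have h1 : (iota hk hl1 hlk σ) i1 = σ i1 := by rw [h]
  have h2 : (iota hk hl1 hlk σ) i1 = σ i2 := by
    show σ (Equiv.swap i1 i2 i1) = σ i2
    rw [Equiv.swap_apply_left]
  rw [h2] at h1
  exact swap_cols_ne hk hl1 hlk σ (σ.injective h1).symm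

end Selection

section Algebra

variable {K : Type*} [Field K]

lemma vertex_mem {k : ℕ} {P : Finset Cell} (hk : 2 ≤ k)
    (hcells : ∀ a b : ℕ, 1 ≤ a → 1 ≤ b → a + b ≤ k → (a, b) ∈ P)
    {i j : ℕ} (hi1 : 1 ≤ i) (hik : i ≤ k) (hj1 : 1 ≤ j) (hjk : j ≤ k)
    (hsum : i + j ≤ k + 2) : (i, j) ∈ vertexSet P := by
  apply Finset.mem_biUnion.mpr
  refine ⟨(max (i-1) 1, max (j-1) 1),
    hcells _ _ (le_max_right _ _) (le_max_right _ _) (by omega), ?_⟩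
  unfold cellVertices
  simp only [Finset.mem_insert, Finset.mem_singleton, Prod.mk.injEq]
  omega

lemma gen_mem {k l : ℕ} (hk : 2 ≤ k) (hl1 : 1 ≤ l) (hlk : l + 1 ≤ k)
    {P : Finset Cell}
    (hcells : ∀ a b : ℕ, 1 ≤ a → 1 ≤ b → a + b ≤ k → (a, b) ∈ P)
    {r1 r2 c1 c2 : ℕ} (hr : r1 < r2) (hc : c1 < c2)
    (hgood : GoodN k l r1 r2 c1 c2)
    (hv11 : (r1+1, c1+1) ∈ vertexSet P) (hv22 : (r2+1, c2+1) ∈ vertexSet P)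
    (hv12 : (r1+1, c2+1) ∈ vertexSet P) (hv21 : (r2+1, c1+1) ∈ vertexSet P) :
    (X ⟨(r1+1, c1+1), hv11⟩ * X ⟨(r2+1, c2+1), hv22⟩
      - X ⟨(r1+1, c2+1), hv12⟩ * X ⟨(r2+1, c1+1), hv21⟩ : PolyRing K P) ∈
      cellsIdeal K P (insert (l, k - l) (P.filter (fun x => x.1 + x.2 ≤ k - 1))) := by
  apply Ideal.subset_span
  refine ⟨⟨(r1+1, c1+1), hv11⟩, ⟨(r2+1, c2+1), hv22⟩, ⟨(r1+1, c2+1), hv12⟩,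
    ⟨(r2+1, c1+1), hv21⟩, ?_, rfl, rfl, rfl⟩
  refine ⟨by exact Nat.add_lt_add_right hr 1, by exact Nat.add_lt_add_right hc 1, ?_⟩
  rintro ⟨x, y⟩ h
  obtain ⟨hx1, hx2, hy1, hy2⟩ := h
  simp only at hx1 hx2 hy1 hy2
  unfold GoodN at hgood
  by_cases hxy : x + y ≤ k - 1
  · exact Finset.mem_insert_of_mem
      (Finset.mem_filter.mpr ⟨hcells x y (by omega) (by omega) (by omega), hxy⟩)
  · have hx : x = l := by omega
    have hy : y = k - l := by omega
    subst hx
    subst hy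
    exact Finset.mem_insert_self _ _

lemma binom_mem {k l : ℕ} (hk : 2 ≤ k) (hl1 : 1 ≤ l) (hlk : l + 1 ≤ k)
    {P : Finset Cell}
    (hcells : ∀ a b : ℕ, 1 ≤ a → 1 ≤ b → a + b ≤ k → (a, b) ∈ P)
    {r1 r2 c1 c2 : ℕ} (hr : r1 ≠ r2) (hc : c1 ≠ c2)
    (hgood : GoodN k l r1 r2 c1 c2)
    (hv11 : (r1+1, c1+1) ∈ vertexSet P) (hv22 : (r2+1, c2+1) ∈ vertexSet P)
    (hv21 : (r2+1, c1+1) ∈ vertexSet P) (hv12 : (r1+1, c2+1) ∈ vertexSet P) :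
    (X ⟨(r1+1, c1+1), hv11⟩ * X ⟨(r2+1, c2+1), hv22⟩
      - X ⟨(r2+1, c1+1), hv21⟩ * X ⟨(r1+1, c2+1), hv12⟩ : PolyRing K P) ∈
      cellsIdeal K P (insert (l, k - l) (P.filter (fun x => x.1 + x.2 ≤ k - 1))) := by
  rcases hr.lt_or_gt with h1 | h1 <;> rcases hc.lt_or_gt with h2 | h2
  · have h := gen_mem (K := K) hk hl1 hlk hcells h1 h2 hgood hv11 hv22 hv12 hv21
    have heq : (X ⟨(r1+1, c1+1), hv11⟩ * X ⟨(r2+1, c2+1), hv22⟩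
        - X ⟨(r2+1, c1+1), hv21⟩ * X ⟨(r1+1, c2+1), hv12⟩ : PolyRing K P)
        = X ⟨(r1+1, c1+1), hv11⟩ * X ⟨(r2+1, c2+1), hv22⟩
          - X ⟨(r1+1, c2+1), hv12⟩ * X ⟨(r2+1, c1+1), hv21⟩ := by ring
    rw [heq]; exact h
  · have hgood' : GoodN k l r1 r2 c2 c1 := by unfold GoodN at hgood ⊢; omega
    have h := gen_mem (K := K) hk hl1 hlk hcells h1 h2 hgood' hv12 hv21 hv11 hv22
    have heq : (X ⟨(r1+1, c1+1), hv11⟩ * X ⟨(r2+1, c2+1), hv22⟩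
        - X ⟨(r2+1, c1+1), hv21⟩ * X ⟨(r1+1, c2+1), hv12⟩ : PolyRing K P)
        = -(X ⟨(r1+1, c2+1), hv12⟩ * X ⟨(r2+1, c1+1), hv21⟩
          - X ⟨(r1+1, c1+1), hv11⟩ * X ⟨(r2+1, c2+1), hv22⟩) := by ring
    rw [heq]; exact neg_mem h
  · have hgood' : GoodN k l r2 r1 c1 c2 := by unfold GoodN at hgood ⊢; omega
    have h := gen_mem (K := K) hk hl1 hlk hcells h1 h2 hgood' hv21 hv12 hv22 hv11
    have heq : (X ⟨(r1+1, c1+1), hv11⟩ * X ⟨(r2+1, c2+1), hv22⟩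
        - X ⟨(r2+1, c1+1), hv21⟩ * X ⟨(r1+1, c2+1), hv12⟩ : PolyRing K P)
        = -(X ⟨(r2+1, c1+1), hv21⟩ * X ⟨(r1+1, c2+1), hv12⟩
          - X ⟨(r2+1, c2+1), hv22⟩ * X ⟨(r1+1, c1+1), hv11⟩) := by ring
    rw [heq]; exact neg_mem h
  · have hgood' : GoodN k l r2 r1 c2 c1 := by unfold GoodN at hgood ⊢; omega
    have h := gen_mem (K := K) hk hl1 hlk hcells h1 h2 hgood' hv22 hv11 hv21 hv12
    have heq : (X ⟨(r1+1, c1+1), hv11⟩ * X ⟨(r2+1, c2+1), hv22⟩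
        - X ⟨(r2+1, c1+1), hv21⟩ * X ⟨(r1+1, c2+1), hv12⟩ : PolyRing K P)
        = X ⟨(r2+1, c2+1), hv22⟩ * X ⟨(r1+1, c1+1), hv11⟩
          - X ⟨(r2+1, c1+1), hv21⟩ * X ⟨(r1+1, c2+1), hv12⟩ := by ring
    rw [heq]; exact h

lemma part2 (K : Type*) [Field K] {k l : ℕ} (hk : 2 ≤ k) (hl1 : 1 ≤ l)
    (hlk : l + 1 ≤ k) (P : Finset Cell)
    (hcells : ∀ a b : ℕ, 1 ≤ a → 1 ≤ b → a + b ≤ k → (a, b) ∈ P) :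
    chainDet K P 0 0 k ∈
      cellsIdeal K P (insert (l, k - l) (P.filter (fun x => x.1 + x.2 ≤ k - 1))) := by
  classical
  set I := cellsIdeal K P (insert (l, k - l) (P.filter (fun x => x.1 + x.2 ≤ k - 1)))
    with hIdef
  set q := Ideal.Quotient.mk I with hq
  rw [← Ideal.Quotient.eq_zero_iff_mem]
  set M : Matrix (Fin k) (Fin k) (PolyRing K P) := Matrix.of fun a b : Fin k =>
    if h : ((a : ℕ) + 1, (b : ℕ) + 1) ∈ vertexSet P then
      (X ⟨((a : ℕ) + 1, (b : ℕ) + 1), h⟩ : PolyRing K P) else 0 with hMdef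
  have hch : chainDet K P 0 0 k = M.det := by
    unfold chainDet
    rw [hMdef]
    congr 1
    ext a b
    simp only [Matrix.of_apply, Nat.zero_add]
  rw [hch]
  show q M.det = 0
  rw [RingHom.map_det, Matrix.det_apply]
  apply Finset.sum_ninvolution (g := iota hk hl1 hlk)
  · -- cancellation
    intro σ
    set u := uu hk hl1 hlk σ with hudef
    set v := vv hk hl1 hlk σ with hvdef
    set i1 := σ⁻¹ u with hi1def
    set i2 := σ⁻¹ v with hi2def
    set s := Equiv.swap i1 i2 with hsdef
    have hi12 : i1 ≠ i2 := swap_cols_ne hk hl1 hlk σ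
    have hiota : iota hk hl1 hlk σ = σ * s := rfl
    have hsign : Equiv.Perm.sign (σ * s) = -Equiv.Perm.sign σ := by
      rw [Equiv.Perm.sign_mul, hsdef, Equiv.Perm.sign_swap hi12, mul_neg_one]
    have hσ1 : σ i1 = u := σ.apply_symm_apply u
    have hσ2 : σ i2 = v := σ.apply_symm_apply v
    have hgood : Good k l σ i1 i2 := good_uv hk hl1 hlk σ
    unfold Good at hgood
    rw [hσ1, hσ2] at hgood
    have huv : (u : ℕ) ≠ (v : ℕ) := by
      intro h
      exact vv_ne_uu hk hl1 hlk σ (Fin.ext h.symm)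
    have hcc : (i1 : ℕ) ≠ (i2 : ℕ) := fun h => hi12 (Fin.ext h)
    have hbound : (u : ℕ) + (i1 : ℕ) + 2 ≤ k + 2 ∧ (v : ℕ) + (i2 : ℕ) + 2 ≤ k + 2 ∧
        (v : ℕ) + (i1 : ℕ) + 2 ≤ k + 2 ∧ (u : ℕ) + (i2 : ℕ) + 2 ≤ k + 2 := by
      unfold GoodN at hgood
      omega
    have hu1 := u.isLt
    have hv1 := v.isLt
    have hi1lt := i1.isLt
    have hi2lt := i2.isLt
    have hv11 : ((u : ℕ) + 1, (i1 : ℕ) + 1) ∈ vertexSet P :=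
      vertex_mem hk hcells (by omega) (by omega) (by omega) (by omega) (by omega)
    have hv22 : ((v : ℕ) + 1, (i2 : ℕ) + 1) ∈ vertexSet P :=
      vertex_mem hk hcells (by omega) (by omega) (by omega) (by omega) (by omega)
    have hv21 : ((v : ℕ) + 1, (i1 : ℕ) + 1) ∈ vertexSet P :=
      vertex_mem hk hcells (by omega) (by omega) (by omega) (by omega) (by omega)
    have hv12 : ((u : ℕ) + 1, (i2 : ℕ) + 1) ∈ vertexSet P :=
      vertex_mem hk hcells (by omega) (by omega) (by omega) (by omega) (by omega)
    have hMentry : ∀ (a b : Fin k) (h : ((a : ℕ) + 1, (b : ℕ) + 1) ∈ vertexSet P),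
        M a b = X ⟨((a : ℕ) + 1, (b : ℕ) + 1), h⟩ := by
      intro a b h
      rw [hMdef]
      simp only [Matrix.of_apply]
      rw [dif_pos h]
    -- the two products
    have hmem2 : i2 ∈ (Finset.univ.erase i1) :=
      Finset.mem_erase.mpr ⟨Ne.symm hi12, Finset.mem_univ i2⟩
    have e1 : ∏ i, M (σ i) i
        = M (σ i1) i1 * (M (σ i2) i2 * ∏ i ∈ (Finset.univ.erase i1).erase i2, M (σ i) i) := by
      rw [← Finset.mul_prod_erase Finset.univ _ (Finset.mem_univ i1),
        ← Finset.mul_prod_erase (Finset.univ.erase i1) _ hmem2]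
    have e2 : ∏ i, M (σ (s i)) i
        = M (σ i2) i1 * (M (σ i1) i2 * ∏ i ∈ (Finset.univ.erase i1).erase i2, M (σ i) i) := by
      rw [← Finset.mul_prod_erase Finset.univ _ (Finset.mem_univ i1),
        ← Finset.mul_prod_erase (Finset.univ.erase i1) _ hmem2]
      rw [hsdef]
      rw [Equiv.swap_apply_left, Equiv.swap_apply_right]
      congr 1
      congr 1
      apply Finset.prod_congr rfl
      intro x hx
      obtain ⟨hx2, hx1⟩ := Finset.mem_erase.mp hx
      obtain ⟨hx1', _⟩ := Finset.mem_erase.mp hx1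
      rw [Equiv.swap_apply_of_ne_of_ne hx1' hx2]
    have hdiff : (∏ i, M (σ i) i) - (∏ i, M (σ (s i)) i) ∈ I := by
      rw [e1, e2, hσ1, hσ2]
      have hfac : M u i1 * (M v i2 * ∏ i ∈ (Finset.univ.erase i1).erase i2, M (σ i) i)
          - M v i1 * (M u i2 * ∏ i ∈ (Finset.univ.erase i1).erase i2, M (σ i) i)
          = (M u i1 * M v i2 - M v i1 * M u i2)
            * ∏ i ∈ (Finset.univ.erase i1).erase i2, M (σ i) i := by ring
      rw [hfac]
      apply Ideal.mul_mem_right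
      rw [hMentry u i1 hv11, hMentry v i2 hv22, hMentry v i1 hv21, hMentry u i2 hv12]
      exact binom_mem hk hl1 hlk hcells huv hcc hgood hv11 hv22 hv21 hv12
    have hqeq : q (∏ i, M (σ i) i) = q (∏ i, M (σ (s i)) i) := by
      rw [hq]
      exact Ideal.Quotient.eq.mpr hdiff
    have hprod1 : ∏ i, q (M (σ i) i) = q (∏ i, M (σ i) i) := (map_prod q _ _).symm
    have hprod2 : ∏ i, q (M ((iota hk hl1 hlk σ) i) i) = q (∏ i, M (σ (s i)) i) := by
      rw [← map_prod q, hiota]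
      simp only [Equiv.Perm.mul_apply]
    show (Equiv.Perm.sign σ) • ∏ i, q (M (σ i) i)
        + (Equiv.Perm.sign (iota hk hl1 hlk σ)) • ∏ i, q (M ((iota hk hl1 hlk σ) i) i) = 0
    rw [hprod1, hprod2, hqeq, hiota, hsign]
    rw [Units.smul_def, Units.smul_def, Units.val_neg, neg_smul]
    exact add_neg_cancel _
  · intro σ _
    exact iota_ne hk hl1 hlk σ
  · intro σ
    exact Finset.mem_univ _
  · intro σ
    exact iota_iota hk hl1 hlk σ

lemma part1 (K : Type*) [Field K] {k : ℕ} (hk : 2 ≤ k) (P : Finset Cell)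
    (hpos : ∀ c ∈ P, 1 ≤ c.1 ∧ 1 ≤ c.2)
    (hcells : ∀ a b : ℕ, 1 ≤ a → 1 ≤ b → a + b ≤ k → (a, b) ∈ P) :
    chainDet K P 0 0 k ∉ cellsIdeal K P (P.filter (fun x => x.1 + x.2 ≤ k - 1)) := by
  classical
  intro hmem
  set f : {v : ℕ × ℕ // v ∈ vertexSet P} → MvPolynomial (ℕ ⊕ ℕ) K := fun v =>
    if (v : ℕ × ℕ).1 + (v : ℕ × ℕ).2 ≤ k + 1 ∧ 1 ≤ (v : ℕ × ℕ).1 ∧ 1 ≤ (v : ℕ × ℕ).2 then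
      X (Sum.inl (v : ℕ × ℕ).1) * X (Sum.inr (v : ℕ × ℕ).2) else 0 with hfdef
  set φ := (aeval f : PolyRing K P →ₐ[K] MvPolynomial (ℕ ⊕ ℕ) K) with hφ
  have hfpos : ∀ (w : {v : ℕ × ℕ // v ∈ vertexSet P}),
      (w : ℕ × ℕ).1 + (w : ℕ × ℕ).2 ≤ k + 1 → 1 ≤ (w : ℕ × ℕ).1 → 1 ≤ (w : ℕ × ℕ).2 →
      φ (X w) = X (Sum.inl (w : ℕ × ℕ).1) * X (Sum.inr (w : ℕ × ℕ).2) := by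
    intro w h1 h2 h3
    rw [hφ, aeval_X, hfdef]
    exact if_pos ⟨h1, h2, h3⟩
  have hfneg : ∀ (w : {v : ℕ × ℕ // v ∈ vertexSet P}),
      ¬ ((w : ℕ × ℕ).1 + (w : ℕ × ℕ).2 ≤ k + 1) → φ (X w) = 0 := by
    intro w h1
    rw [hφ, aeval_X, hfdef]
    exact if_neg (fun hcon => h1 hcon.1)
  have hgen : ∀ g ∈ innerIntervalBinomials K P (P.filter (fun x => x.1 + x.2 ≤ k - 1)),
      φ g = 0 := by
    rintro g ⟨a, b, c, d, hab, hc, hd, rfl⟩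
    obtain ⟨hlt1, hlt2, hin⟩ := hab
    have hcell1 : ((a : ℕ × ℕ).1, (a : ℕ × ℕ).2) ∈ P.filter (fun x => x.1 + x.2 ≤ k - 1) :=
      hin _ ⟨le_refl _, hlt1, le_refl _, hlt2⟩
    have hcell2 : ((b : ℕ × ℕ).1 - 1, (b : ℕ × ℕ).2 - 1) ∈
        P.filter (fun x => x.1 + x.2 ≤ k - 1) :=
      hin _ ⟨by omega, by omega, by omega, by omega⟩
    obtain ⟨hP1, hs1⟩ := Finset.mem_filter.mp hcell1
    obtain ⟨hP2, hs2⟩ := Finset.mem_filter.mp hcell2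
    have hpos1 := hpos _ hP1
    have hpos2 := hpos _ hP2
    simp only at hpos1 hpos2 hs1 hs2
    have hc1 : (c : ℕ × ℕ).1 = (a : ℕ × ℕ).1 := by rw [hc]
    have hc2 : (c : ℕ × ℕ).2 = (b : ℕ × ℕ).2 := by rw [hc]
    have hd1 : (d : ℕ × ℕ).1 = (b : ℕ × ℕ).1 := by rw [hd]
    have hd2 : (d : ℕ × ℕ).2 = (a : ℕ × ℕ).2 := by rw [hd]
    rw [map_sub, map_mul, map_mul]
    rw [hfpos a (by omega) (by omega) (by omega)]
    rw [hfpos b (by omega) (by omega) (by omega)]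
    rw [hfpos c (by omega) (by omega) (by omega)]
    rw [hfpos d (by omega) (by omega) (by omega)]
    rw [hc1, hc2, hd1, hd2]
    ring
  have hker : cellsIdeal K P (P.filter (fun x => x.1 + x.2 ≤ k - 1)) ≤
      RingHom.ker (φ : PolyRing K P →+* MvPolynomial (ℕ ⊕ ℕ) K) := by
    rw [cellsIdeal, Ideal.span_le]
    intro g hg
    simp only [SetLike.mem_coe, RingHom.mem_ker]
    exact hgen g hg
  have h0 : φ (chainDet K P 0 0 k) = 0 := hker hmem
  set N : Matrix (Fin k) (Fin k) (MvPolynomial (ℕ ⊕ ℕ) K) := Matrix.of fun a b : Fin k =>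
    if (a : ℕ) + (b : ℕ) + 2 ≤ k + 1 then
      X (Sum.inl ((a : ℕ) + 1)) * X (Sum.inr ((b : ℕ) + 1)) else 0 with hNdef
  have hφdet : φ (chainDet K P 0 0 k) = N.det := by
    unfold chainDet
    rw [AlgHom.map_det]
    congr 1
    ext a b
    rw [AlgHom.mapMatrix_apply]
    simp only [Matrix.map_apply, Matrix.of_apply, Nat.zero_add, hNdef]
    by_cases hmem' : ((a : ℕ) + 1, (b : ℕ) + 1) ∈ vertexSet P
    · rw [dif_pos hmem']
      by_cases hcond : (a : ℕ) + (b : ℕ) + 2 ≤ k + 1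
      · rw [hfpos ⟨((a : ℕ) + 1, (b : ℕ) + 1), hmem'⟩
          (show (a : ℕ) + 1 + ((b : ℕ) + 1) ≤ k + 1 by omega)
          (show 1 ≤ (a : ℕ) + 1 by omega) (show 1 ≤ (b : ℕ) + 1 by omega)]
        rw [if_pos hcond]
      · rw [hfneg ⟨((a : ℕ) + 1, (b : ℕ) + 1), hmem'⟩
          (show ¬ ((a : ℕ) + 1 + ((b : ℕ) + 1) ≤ k + 1) by omega), if_neg hcond]
    · rw [dif_neg hmem', map_zero, if_neg]
      intro hcond
      have hak := a.isLt
      have hbk := b.isLt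
      exact hmem' (vertex_mem hk hcells (by omega) (by omega) (by omega) (by omega) (by omega))
  rw [hφdet] at h0
  have hperm := Matrix.det_permute' Fin.revPerm N
  rw [h0, mul_zero] at hperm
  have hrev : ∀ j : Fin k, ((Fin.revPerm j : Fin k) : ℕ) = k - ((j : ℕ) + 1) := fun j => rfl
  have htri : (N.submatrix id ⇑Fin.revPerm).BlockTriangular id := by
    intro i j hij
    have hij' : (j : ℕ) < (i : ℕ) := hij
    simp only [Matrix.submatrix_apply, id_eq, hNdef, Matrix.of_apply]
    rw [if_neg]
    rw [hrev]
    have hik := i.isLt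
    have hjk := j.isLt
    omega
  have hdet := Matrix.det_of_upperTriangular htri
  rw [hperm] at hdet
  have hdiag : ∀ i : Fin k, (N.submatrix id ⇑Fin.revPerm) i i ≠ 0 := by
    intro i
    simp only [Matrix.submatrix_apply, id_eq, hNdef, Matrix.of_apply]
    rw [if_pos]
    · exact mul_ne_zero (X_ne_zero _) (X_ne_zero _)
    · rw [hrev]
      have hik := i.isLt
      omega
  exact (Finset.prod_ne_zero_iff.mpr (fun i _ => hdiag i)) hdet.symm

end Algebra

end ChainDetAux


/-- If the horizontally convex polyomino `P` contains all cells with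
lower-left vertex `(l, m)`, `l, m ≥ 1`, `l + m ≤ k`, then the determinant `f_k` of the
`k × k` matrix with entries `x_{(a,b)}` (or `0`) lies outside `I_{P_{k-1}}` and inside
`I_{P_{k-1} ∪ {C_{k,l}}}` for every `1 ≤ l ≤ k - 1`. -/
theorem chainDet_mem_cellsIdeal (K : Type*) [Field K] (k : ℕ) (hk : 2 ≤ k)
    (P : Finset Cell) (hpoly : IsPolyomino P) (hconv : HorizontallyConvex P)
    (hcells : ∀ l m : ℕ, 1 ≤ l → 1 ≤ m → l + m ≤ k → (l, m) ∈ P) :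
    chainDet K P 0 0 k ∉ cellsIdeal K P (P.filter (fun x => x.1 + x.2 ≤ k - 1)) ∧
      ∀ l : ℕ, 1 ≤ l → l ≤ k - 1 →
        chainDet K P 0 0 k ∈
          cellsIdeal K P (insert (l, k - l) (P.filter (fun x => x.1 + x.2 ≤ k - 1))) := by
  have hpos : ∀ c ∈ P, 1 ≤ c.1 ∧ 1 ≤ c.2 := hpoly.2.1
  constructor
  · exact ChainDetAux.part1 K hk P hpos hcells
  · intro l hl1 hlk
    exact ChainDetAux.part2 K hk hl1 (by omega) P hcells
end
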